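/- arXiv:1807.00579 — 14 statements merged into one kernel-verified Lean document; each statement's English description precedes it below -/
import Mathlib

section
/- Let H and K be Hilbert spaces and A, C : H →L[ℂ] K bounded linear operators. If range C ⊆ range A, then there exists a bounded linear operator X : H →L[ℂ] H with A ∘L X = C. -/
open ContinuousLinearMap Filter Topology

theorem douglas_range_to_factor
    {H K : Type*} [NormedAddCommGroup H] [InnerProductSpace ℂ H] [CompleteSpace H]
    [NormedAddCommGroup K] [InnerProductSpace ℂ K] [CompleteSpace K]
    (A C : H →L[ℂ] K)
    (h : (LinearMap.range (C : H →ₗ[ℂ] K) : Set K) ⊆ (LinearMap.range (A : H →ₗ[ℂ] K) : Set K)) :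
    ∃ X : H →L[ℂ] H, A ∘L X = C := by
  classical
  set N : Submodule ℂ H := (LinearMap.ker (A : H →ₗ[ℂ] K))ᗮ with hN
  haveI : CompleteSpace (LinearMap.ker (A : H →ₗ[ℂ] K)) :=
    (ContinuousLinearMap.isClosed_ker A).completeSpace_coe
  -- restriction of A to N
  set A' : N →ₗ[ℂ] K := (A : H →ₗ[ℂ] K) ∘ₗ N.subtype with hA'
  have hinj : Function.Injective A' := by
    intro x y hxy
    have hmem : ((x : H) - y) ∈ LinearMap.ker (A : H →ₗ[ℂ] K) := by
      simp only [LinearMap.mem_ker, map_sub]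
      simpa [A', hN] using sub_eq_zero.mpr hxy
    have hmemN : ((x : H) - y) ∈ N := N.sub_mem x.2 y.2
    have : ((x : H) - y) = 0 :=
      Submodule.disjoint_def.mp (LinearMap.ker (A : H →ₗ[ℂ] K)).orthogonal_disjoint _ hmem hmemN
    exact Subtype.ext (sub_eq_zero.mp this)
  -- every C h is in the range of A'
  have hrange : ∀ x : H, C x ∈ LinearMap.range A' := by
    intro x
    obtain ⟨y, hy⟩ := h (Set.mem_range_self x)
    set k : H := ((LinearMap.ker (A : H →ₗ[ℂ] K)).orthogonalProjection y : H) with hk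
    have hyk : y - k ∈ N := Submodule.sub_starProjection_mem_orthogonal y
    refine ⟨⟨y - k, hyk⟩, ?_⟩
    have hAk : A k = 0 := ((LinearMap.ker (A : H →ₗ[ℂ] K)).orthogonalProjection y).2
    simp only [A', LinearMap.comp_apply, Submodule.subtype_apply,
      ContinuousLinearMap.coe_coe, map_sub, hAk, sub_zero]
    exact hy
  -- the underlying linear map of X
  let e : N ≃ₗ[ℂ] LinearMap.range A' := LinearEquiv.ofInjective A' hinj
  let C' : H →ₗ[ℂ] LinearMap.range A' :=
    LinearMap.codRestrict (LinearMap.range A') (C : H →ₗ[ℂ] K) hrange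
  let g : H →ₗ[ℂ] H := N.subtype ∘ₗ (e.symm : LinearMap.range A' →ₗ[ℂ] N) ∘ₗ C'
  have hgN : ∀ x, g x ∈ N := fun x => (e.symm (C' x)).2
  have hAg : ∀ x, A (g x) = C x := by
    intro x
    have := e.apply_symm_apply (C' x)
    have h2 : A' (e.symm (C' x)) = C x := by
      have h4 : (e (e.symm (C' x)) : K) = A' (e.symm (C' x)) := by
        rw [LinearEquiv.ofInjective_apply]
      rw [e.apply_symm_apply] at h4
      exact h4.symm
    simpa [g, A', LinearMap.comp_apply] using h2
  -- closed graph
  have hg : ∀ (u : ℕ → H) (x y : H), Tendsto u atTop (𝓝 x) →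
      Tendsto (g ∘ u) atTop (𝓝 y) → y = g x := by
    intro u x y hu hgu
    have h1 : Tendsto (fun n => A (g (u n))) atTop (𝓝 (A y)) :=
      (A.continuous.tendsto y).comp hgu
    have h2 : Tendsto (fun n => C (u n)) atTop (𝓝 (C x)) :=
      (C.continuous.tendsto x).comp hu
    have h3 : A y = C x := by
      have : (fun n => A (g (u n))) = fun n => C (u n) := funext fun n => hAg (u n)
      rw [this] at h1
      exact tendsto_nhds_unique h1 h2
    have hyN : y ∈ N := by
      have hcl : IsClosed (N : Set H) := Submodule.isClosed_orthogonal _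
      exact hcl.mem_of_tendsto hgu (Eventually.of_forall fun n => hgN (u n))
    have hker : y - g x ∈ LinearMap.ker (A : H →ₗ[ℂ] K) := by
      simp only [LinearMap.mem_ker, map_sub, ContinuousLinearMap.coe_coe]
      rw [h3, hAg x, sub_self]
    have hinN : y - g x ∈ N := N.sub_mem hyN (hgN x)
    have : y - g x = 0 :=
      Submodule.disjoint_def.mp (LinearMap.ker (A : H →ₗ[ℂ] K)).orthogonal_disjoint _ hker hinN
    exact sub_eq_zero.mp this
  refine ⟨ContinuousLinearMap.ofSeqClosedGraph hg, ?_⟩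
  ext x
  simpa using hAg x
end

section
/- Let H, K be Hilbert spaces and A, C : H →L[ℂ] K. If there exists X : H →L[ℂ] H with A ∘L X = C, then there exists k ≥ 0 such that C ∘L C* ≤ k^2 • (A ∘L A*) in the Loewner order on self-adjoint operators on K. -/
set_option maxHeartbeats 1000000


open ContinuousLinearMap

theorem douglas_factor_to_majorize
    {H K : Type*} [NormedAddCommGroup H] [InnerProductSpace ℂ H] [CompleteSpace H]
    [NormedAddCommGroup K] [InnerProductSpace ℂ K] [CompleteSpace K]
    (A C : H →L[ℂ] K)
    (h : ∃ X : H →L[ℂ] H, A ∘L X = C) :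
    ∃ k : ℝ, 0 ≤ k ∧ ((k ^ 2) • (A ∘L adjoint A) - C ∘L adjoint C).IsPositive := by
  obtain ⟨X, hX⟩ := h
  refine ⟨‖X‖, norm_nonneg X, ?_, ?_⟩
  · have hA : IsSelfAdjoint (A ∘L adjoint A) := by
      rw [IsSelfAdjoint, star_eq_adjoint, adjoint_comp, adjoint_adjoint]
    have hC : IsSelfAdjoint (C ∘L adjoint C) := by
      rw [IsSelfAdjoint, star_eq_adjoint, adjoint_comp, adjoint_adjoint]
    have hA' := hA.isSymmetric
    have hC' := hC.isSymmetric
    intro x y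
    simp only [ContinuousLinearMap.coe_coe, sub_apply, smul_apply,
      RCLike.real_smul_eq_coe_smul (K := ℂ),
      inner_sub_left, inner_sub_right, inner_smul_left, inner_smul_right]
    have hA2 : (inner ℂ ((A ∘L adjoint A) x) y : ℂ) = inner ℂ x ((A ∘L adjoint A) y) := hA' x y
    have hC2 : (inner ℂ ((C ∘L adjoint C) x) y : ℂ) = inner ℂ x ((C ∘L adjoint C) y) := hC' x y
    rw [RCLike.conj_ofReal, hA2, hC2]
  · intro y
    have hCstar : adjoint C = adjoint X ∘L adjoint A := by
      rw [← hX, adjoint_comp]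
    have key : ‖adjoint C y‖ ≤ ‖X‖ * ‖adjoint A y‖ := by
      rw [hCstar]
      calc ‖(adjoint X ∘L adjoint A) y‖ ≤ ‖adjoint X‖ * ‖adjoint A y‖ :=
            (adjoint X).le_opNorm _
        _ = ‖X‖ * ‖adjoint A y‖ := by
            rw [show ‖adjoint X‖ = ‖X‖ from (LinearIsometryEquiv.norm_map adjoint X : _)]
    have heq : ((‖X‖ ^ 2 • (A ∘L adjoint A) - C ∘L adjoint C)).reApplyInnerSelf y
        = ‖X‖ ^ 2 * ‖adjoint A y‖ ^ 2 - ‖adjoint C y‖ ^ 2 := by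
      simp only [reApplyInnerSelf, sub_apply, smul_apply, comp_apply,
        RCLike.real_smul_eq_coe_smul (K := ℂ),
        inner_sub_left, inner_smul_left, map_sub]
      rw [← adjoint_inner_right A, ← adjoint_inner_right C]
      simp [inner_self_eq_norm_sq_to_K, Complex.real_smul, ← Complex.ofReal_pow,
        ← Complex.ofReal_mul]
    rw [heq]
    nlinarith [mul_self_le_mul_self (norm_nonneg (adjoint C y)) key,
      norm_nonneg (adjoint A y), norm_nonneg X]
end

section
/- Let H, K be Hilbert spaces and A, C : H →L[ℂ] K. If C ∘L C* ≤ k^2 • (A ∘L A*) for some k ≥ 0, then range C ⊆ range A. -/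
open ContinuousLinearMap

theorem douglas_majorize_to_range
    {H K : Type*} [NormedAddCommGroup H] [InnerProductSpace ℂ H] [CompleteSpace H]
    [NormedAddCommGroup K] [InnerProductSpace ℂ K] [CompleteSpace K]
    (A C : H →L[ℂ] K) (k : ℝ) (hk : 0 ≤ k)
    (h : ((k ^ 2) • (A ∘L adjoint A) - C ∘L adjoint C).IsPositive) :
    (LinearMap.range (C : H →ₗ[ℂ] K) : Set K) ⊆ (LinearMap.range (A : H →ₗ[ℂ] K) : Set K) := by
  -- key norm inequality : ‖C* z‖ ≤ k * ‖A* z‖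
  have key : ∀ z : K, ‖(adjoint C) z‖ ≤ k * ‖(adjoint A) z‖ := by
    intro z
    have h0 := h.2 z
    rw [reApplyInnerSelf_apply] at h0
    have hexp : ((k ^ 2 • (A ∘L adjoint A) - C ∘L adjoint C) z) =
        (k:ℂ) ^ 2 • (A ((adjoint A) z)) - C ((adjoint C) z) := by
      simp [sub_apply, smul_apply, comp_apply]
      norm_cast
    rw [hexp] at h0
    have h1 : (inner ℂ ((k:ℂ) ^ 2 • (A ((adjoint A) z)) - C ((adjoint C) z)) z : ℂ)
        = (k^2 : ℝ) • (inner ℂ (A ((adjoint A) z)) z : ℂ) - inner ℂ (C ((adjoint C) z)) z := by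
      rw [inner_sub_left, inner_smul_left, Complex.real_smul]
      simp [map_pow, Complex.conj_ofReal]
    rw [h1] at h0
    rw [← adjoint_inner_right A, ← adjoint_inner_right C] at h0
    rw [map_sub, RCLike.smul_re, inner_self_eq_norm_sq, inner_self_eq_norm_sq] at h0
    have h2 : (0:ℝ) ≤ k^2 * ‖(adjoint A) z‖^2 - ‖(adjoint C) z‖^2 := h0
    have h3 : ‖(adjoint C) z‖^2 ≤ (k * ‖(adjoint A) z‖)^2 := by
      nlinarith
    calc ‖(adjoint C) z‖ = Real.sqrt (‖(adjoint C) z‖^2) :=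
          (Real.sqrt_sq (norm_nonneg _)).symm
      _ ≤ Real.sqrt ((k * ‖(adjoint A) z‖)^2) := Real.sqrt_le_sqrt h3
      _ = k * ‖(adjoint A) z‖ := Real.sqrt_sq (by positivity)
  rintro y ⟨x₀, rfl⟩
  -- the functional z ↦ ⟪x₀, C* z⟫ = ⟪C x₀, z⟫
  set g₀ : K →ₗ[ℂ] ℂ := ((innerSL ℂ x₀).comp (adjoint C)).toLinearMap with hg₀
  have hker : LinearMap.ker ((adjoint A : K →L[ℂ] H) : K →ₗ[ℂ] H) ≤ LinearMap.ker g₀ := by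
    intro z hz
    simp only [LinearMap.mem_ker] at hz ⊢
    have hz' : (adjoint A) z = 0 := hz
    have : ‖(adjoint C) z‖ ≤ 0 := by
      have := key z
      rwa [hz', norm_zero, mul_zero] at this
    have hCz : (adjoint C) z = 0 := norm_le_zero_iff.mp this
    simp [hg₀, hCz]
  set T : K →ₗ[ℂ] H := ((adjoint A : K →L[ℂ] H) : K →ₗ[ℂ] H) with hT
  set f₁ : (K ⧸ LinearMap.ker T) →ₗ[ℂ] ℂ := (LinearMap.ker T).liftQ g₀ hker with hf₁
  set e := T.quotKerEquivRange with he
  set f : LinearMap.range T →ₗ[ℂ] ℂ := f₁ ∘ₗ (e.symm : LinearMap.range T →ₗ[ℂ] _) with hf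
  have hfval : ∀ z : K, ∀ hz : T z ∈ LinearMap.range T, f ⟨T z, hz⟩ = g₀ z := by
    intro z hz
    have : e.symm ⟨T z, hz⟩ = (LinearMap.ker T).mkQ z := T.quotKerEquivRange_symm_apply_image z hz
    simp [hf, this, hf₁]
  have hbound : ∀ u : LinearMap.range T, ‖f u‖ ≤ (k * ‖x₀‖) * ‖u‖ := by
    rintro ⟨u, z, rfl⟩
    rw [hfval z ⟨z, rfl⟩]
    have : ‖g₀ z‖ ≤ ‖x₀‖ * ‖(adjoint C) z‖ := by
      simpa [hg₀] using norm_inner_le_norm (𝕜 := ℂ) x₀ ((adjoint C) z)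
    calc ‖g₀ z‖ ≤ ‖x₀‖ * ‖(adjoint C) z‖ := this
      _ ≤ ‖x₀‖ * (k * ‖(adjoint A) z‖) := by
          exact mul_le_mul_of_nonneg_left (key z) (norm_nonneg _)
      _ = (k * ‖x₀‖) * ‖(⟨T z, ⟨z, rfl⟩⟩ : LinearMap.range T)‖ := by
          simp [hT]; ring
  set F : (LinearMap.range T : Submodule ℂ H) →L[ℂ] ℂ :=
    LinearMap.mkContinuous f (k * ‖x₀‖) hbound with hF
  obtain ⟨G, hG, -⟩ := exists_extension_norm_eq (LinearMap.range T) F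
  set w := (InnerProductSpace.toDual ℂ H).symm G with hw
  have hwval : ∀ u : H, G u = inner ℂ w u := by
    intro u
    simp [hw, ← InnerProductSpace.toDual_apply_apply]
  refine ⟨w, ?_⟩
  apply ext_inner_right ℂ
  intro z
  have h1 : (inner ℂ (A w) z : ℂ) = inner ℂ w ((adjoint A) z) := by
    rw [← adjoint_inner_right]
  have h2 : inner ℂ w ((adjoint A) z) = G ((adjoint A) z) := (hwval _).symm
  have h3 : G ((adjoint A) z) = F ⟨T z, ⟨z, rfl⟩⟩ := by
    have := hG ⟨T z, ⟨z, rfl⟩⟩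
    simpa [hT] using this
  have h4 : F ⟨T z, ⟨z, rfl⟩⟩ = g₀ z := by
    rw [hF]; exact hfval z ⟨z, rfl⟩
  have h5 : g₀ z = inner ℂ (C x₀) z := by
    simp [hg₀, innerSL_apply_apply]
    rw [← adjoint_inner_left, adjoint_adjoint]
  exact h1.trans (h2.trans (h3.trans (h4.trans h5)))
end

section
/- Let H, K be Hilbert spaces and A, C : H →L[ℂ] K with range C ⊆ range A. Then there exists a unique X : H →L[ℂ] H such that A ∘L X = C, ker X = ker C, and range X ⊆ closure (range A*). -/
open ContinuousLinearMap

theorem douglas_reduced_solution_exists_unique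
    {H K : Type*} [NormedAddCommGroup H] [InnerProductSpace ℂ H] [CompleteSpace H]
    [NormedAddCommGroup K] [InnerProductSpace ℂ K] [CompleteSpace K]
    (A C : H →L[ℂ] K)
    (h : (LinearMap.range (C : H →ₗ[ℂ] K) : Set K) ⊆ (LinearMap.range (A : H →ₗ[ℂ] K) : Set K)) :
    ∃! X : H →L[ℂ] H, A ∘L X = C ∧ LinearMap.ker (X : H →ₗ[ℂ] H) = LinearMap.ker (C : H →ₗ[ℂ] K) ∧
      (LinearMap.range (X : H →ₗ[ℂ] H) : Set H) ⊆ closure (LinearMap.range (adjoint A : K →ₗ[ℂ] H) : Set H) := by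
  classical
  set N : Submodule ℂ H := (LinearMap.ker (A : H →ₗ[ℂ] K))ᗮ with hN
  have hNclosed : IsClosed (N : Set H) := Submodule.isClosed_orthogonal _
  haveI : CompleteSpace N := hNclosed.completeSpace_coe
  haveI : CompleteSpace (LinearMap.ker (A : H →ₗ[ℂ] K)) :=
    (ContinuousLinearMap.isClosed_ker A).completeSpace_coe
  -- ker A = (range A†)ᗮ
  have hker : LinearMap.ker (A : H →ₗ[ℂ] K) = (LinearMap.range (ContinuousLinearMap.adjoint A : K →ₗ[ℂ] H))ᗮ := by
    ext x
    simp only [LinearMap.mem_ker, Submodule.mem_orthogonal]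
    constructor
    · rintro hx u hu
      obtain ⟨y, rfl⟩ := hu
      rw [ContinuousLinearMap.coe_coe] at hx ⊢
      rw [ContinuousLinearMap.adjoint_inner_left, hx, inner_zero_right]
    · intro hx
      have h0 : (inner ℂ (A x) (A x) : ℂ) = 0 := by
        rw [← ContinuousLinearMap.adjoint_inner_left]
        exact hx _ (LinearMap.mem_range_self _ (A x))
      exact inner_self_eq_zero.mp h0
  have hNN : Nᗮ = LinearMap.ker (A : H →ₗ[ℂ] K) := by
    rw [hN, Submodule.orthogonal_orthogonal]
  have hNeq : (N : Set H) = closure (LinearMap.range (ContinuousLinearMap.adjoint A : K →ₗ[ℂ] H) : Set H) := by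
    rw [hN, hker, Submodule.orthogonal_orthogonal_eq_closure,
      Submodule.topologicalClosure_coe]
  -- any two elements of N with the same image under A are equal
  have uniq : ∀ x z : H, x ∈ N → z ∈ N → A x = A z → x = z := by
    intro x z hx hz hxz
    have hd : x - z ∈ N := Submodule.sub_mem N hx hz
    have hdk : x - z ∈ Nᗮ := by
      rw [hNN, LinearMap.mem_ker, map_sub, ContinuousLinearMap.coe_coe, hxz, sub_self]
    have h0 : (inner ℂ (x - z) (x - z) : ℂ) = 0 :=
      (Submodule.mem_orthogonal _ _).mp hdk _ hd
    exact sub_eq_zero.mp (inner_self_eq_zero.mp h0)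
  -- pointwise existence
  have exg : ∀ y : H, ∃ x : H, x ∈ N ∧ A x = C y := by
    intro y
    have hmem : C y ∈ (LinearMap.range (A : H →ₗ[ℂ] K) : Set K) := h (LinearMap.mem_range_self (C : H →ₗ[ℂ] K) y)
    obtain ⟨x, hx⟩ := hmem
    refine ⟨(N.orthogonalProjectionOnto x : H), SetLike.coe_mem _, ?_⟩
    have hsub : x - (N.orthogonalProjectionOnto x : H) ∈ Nᗮ :=
      Submodule.sub_starProjection_mem_orthogonal (K := N) x
    rw [hNN] at hsub
    have h0 : A x - A ((N.orthogonalProjectionOnto x : H)) = 0 := by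
      rw [← map_sub]; exact hsub
    rw [← sub_eq_zero.mp h0]
    exact hx
  choose g hgN hgA using exg
  -- g is linear
  have hg_add : ∀ a b : H, g (a + b) = g a + g b := by
    intro a b
    refine uniq _ _ (hgN _) (Submodule.add_mem N (hgN a) (hgN b)) ?_
    rw [hgA, map_add, map_add, hgA, hgA]
  have hg_smul : ∀ (c : ℂ) (a : H), g (c • a) = c • g a := by
    intro c a
    refine uniq _ _ (hgN _) (Submodule.smul_mem N c (hgN a)) ?_
    rw [hgA, map_smul, map_smul, hgA]
  let X₀ : H →ₗ[ℂ] H :=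
    { toFun := g, map_add' := hg_add, map_smul' := hg_smul }
  -- closed graph
  have hgraph : IsClosed (X₀.graph : Set (H × H)) := by
    have heq : (X₀.graph : Set (H × H)) =
        {p : H × H | p.2 ∈ (N : Set H)} ∩ {p : H × H | A p.2 = C p.1} := by
      ext p
      simp only [SetLike.mem_coe, LinearMap.mem_graph_iff, Set.mem_inter_iff, Set.mem_setOf_eq]
      constructor
      · intro hp
        rw [hp]
        exact ⟨hgN p.1, hgA p.1⟩
      · rintro ⟨h1, h2⟩
        exact uniq _ _ h1 (hgN p.1) (by rw [h2]; exact (hgA p.1).symm)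
    rw [heq]
    exact (hNclosed.preimage continuous_snd).inter
      (isClosed_eq (A.continuous.comp continuous_snd) (C.continuous.comp continuous_fst))
  let X : H →L[ℂ] H := ContinuousLinearMap.ofIsClosedGraph hgraph
  have hXg : ∀ y, X y = g y := fun y =>
    congrFun (ContinuousLinearMap.coeFn_ofIsClosedGraph hgraph) y
  refine ⟨X, ⟨?_, ?_, ?_⟩, ?_⟩
  · ext y
    simp only [ContinuousLinearMap.comp_apply, hXg]
    exact hgA y
  · ext y
    simp only [LinearMap.mem_ker, ContinuousLinearMap.coe_coe, hXg]
    constructor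
    · intro hy
      rw [← hgA y, hy, map_zero]
    · intro hy
      exact uniq _ _ (hgN y) (Submodule.zero_mem N) (by rw [hgA, hy, map_zero])
  · rintro x hx
    obtain ⟨y, rfl⟩ := hx
    rw [← hNeq]
    have : X y = g y := hXg y
    simpa [this] using hgN y
  · rintro Y ⟨hY1, hY2, hY3⟩
    ext y
    have hYm : Y y ∈ N := by
      rw [← SetLike.mem_coe, hNeq]
      exact hY3 (LinearMap.mem_range_self _ y)
    have hXm : X y ∈ N := by
      rw [hXg]; exact hgN y
    have hAY : A (Y y) = C y := by
      have := DFunLike.congr_fun hY1 y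
      simpa using this
    refine (uniq _ _ hYm hXm ?_)
    rw [hAY, hXg, hgA]
end

section
/- Let H, K be Hilbert spaces and A, C : H →L[ℂ] K. The inequality C ∘L C* ≤ λ • (A ∘L A*) holds for some λ > 0 if and only if there exists μ > 0 such that ‖C* z‖ ≤ μ • ‖A* z‖ for all z ∈ K. -/
open ContinuousLinearMap

lemma inner_comp_adjoint_self'
    {H K : Type*} [NormedAddCommGroup H] [InnerProductSpace ℂ H] [CompleteSpace H]
    [NormedAddCommGroup K] [InnerProductSpace ℂ K] [CompleteSpace K]
    (A : H →L[ℂ] K) (z : K) :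
    (inner ℂ ((A ∘L adjoint A) z) z : ℂ) = ((‖adjoint A z‖ ^ 2 : ℝ) : ℂ) := by
  rw [ContinuousLinearMap.comp_apply, ← ContinuousLinearMap.adjoint_inner_right,
    inner_self_eq_norm_sq_to_K]
  norm_cast

lemma reApply_key
    {H K : Type*} [NormedAddCommGroup H] [InnerProductSpace ℂ H] [CompleteSpace H]
    [NormedAddCommGroup K] [InnerProductSpace ℂ K] [CompleteSpace K]
    (A C : H →L[ℂ] K) (lam : ℝ) (z : K) :
    (lam • (A ∘L adjoint A) - C ∘L adjoint C).reApplyInnerSelf z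
      = lam * ‖adjoint A z‖ ^ 2 - ‖adjoint C z‖ ^ 2 := by
  rw [ContinuousLinearMap.reApplyInnerSelf_apply, ContinuousLinearMap.sub_apply,
    ContinuousLinearMap.smul_apply, inner_sub_left, RCLike.real_smul_eq_coe_smul (K := ℂ), inner_smul_left,
    inner_comp_adjoint_self' A z, inner_comp_adjoint_self' C z]
  simp [Complex.conj_ofReal]
  norm_cast

theorem douglas_majorization_iff_norm
    {H K : Type*} [NormedAddCommGroup H] [InnerProductSpace ℂ H] [CompleteSpace H]
    [NormedAddCommGroup K] [InnerProductSpace ℂ K] [CompleteSpace K]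
    (A C : H →L[ℂ] K) :
    (∃ lam : ℝ, 0 < lam ∧ (lam • (A ∘L adjoint A) - C ∘L adjoint C).IsPositive) ↔
      (∃ mu : ℝ, 0 < mu ∧ ∀ z : K, ‖adjoint C z‖ ≤ mu * ‖adjoint A z‖) := by
  constructor
  · rintro ⟨lam, hlam, hsa, hpos⟩
    refine ⟨Real.sqrt lam, Real.sqrt_pos.mpr hlam, fun z => ?_⟩
    have h0 := hpos z
    rw [reApply_key] at h0
    have h2 : ‖adjoint C z‖ ^ 2 ≤ (Real.sqrt lam * ‖adjoint A z‖) ^ 2 := by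
      rw [mul_pow, Real.sq_sqrt hlam.le]; linarith
    have := Real.sqrt_le_sqrt h2
    rwa [Real.sqrt_sq (norm_nonneg _), Real.sqrt_sq (by positivity)] at this
  · rintro ⟨mu, hmu, hmaj⟩
    refine ⟨mu ^ 2, pow_pos hmu 2, ?_, fun z => ?_⟩
    · have hA : IsSelfAdjoint (A ∘L adjoint A) := by
        rw [isSelfAdjoint_iff', ContinuousLinearMap.adjoint_comp,
          ContinuousLinearMap.adjoint_adjoint]
      have hC : IsSelfAdjoint (C ∘L adjoint C) := by
        rw [isSelfAdjoint_iff', ContinuousLinearMap.adjoint_comp,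
          ContinuousLinearMap.adjoint_adjoint]
      exact ((IsSelfAdjoint.smul (star_trivial (mu ^ 2 : ℝ)) hA).sub hC).isSymmetric
    · rw [reApply_key]
      have := hmaj z
      nlinarith [norm_nonneg (adjoint A z), norm_nonneg (adjoint C z)]
end

section
/- Let H, K be Hilbert spaces, A, C : H →L[ℂ] K with range C ⊆ range A. Let D be the reduced solution of A X = C (i.e., A D = C and range D ⊆ closure (range A*)), and let U be the partial isometry from the polar decomposition of A, with P = U* ∘L U. Then an operator X : H →L[ℂ] H satisfies A X = C if and only if X = D + (1 - P) ∘L Y for some Y : H →L[ℂ] H. -/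
open ContinuousLinearMap

theorem general_solution_AX_eq_C
    {H K : Type*} [NormedAddCommGroup H] [InnerProductSpace ℂ H] [CompleteSpace H]
    [NormedAddCommGroup K] [InnerProductSpace ℂ K] [CompleteSpace K]
    (A C : H →L[ℂ] K) (D : H →L[ℂ] H) (U : H →L[ℂ] K)
    (hrange : (LinearMap.range (C : H →ₗ[ℂ] K) : Set K) ⊆ (LinearMap.range (A : H →ₗ[ℂ] K) : Set K))
    (hD1 : A ∘L D = C)
    (hD2 : (LinearMap.range (D : H →ₗ[ℂ] H) : Set H) ⊆ closure (LinearMap.range (adjoint A : K →ₗ[ℂ] H) : Set H))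
    (hU1 : A = U ∘L CFC.sqrt (adjoint A ∘L A))
    (hU2 : adjoint U ∘L U =
      (LinearMap.range (adjoint A : K →ₗ[ℂ] H)).topologicalClosure.subtypeL ∘L
        Submodule.orthogonalProjectionOnto (LinearMap.range (adjoint A : K →ₗ[ℂ] H)).topologicalClosure) :
    ∀ X : H →L[ℂ] H, A ∘L X = C ↔
      ∃ Y : H →L[ℂ] H, X = D + (1 - adjoint U ∘L U) ∘L Y := by
  set S := (LinearMap.range (adjoint A : K →ₗ[ℂ] H)).topologicalClosure with hS
  -- Sᗮ = (range A†)ᗮ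
  have hSorth : Sᗮ = (LinearMap.range (adjoint A : K →ₗ[ℂ] H))ᗮ := by
    rw [hS, ← Submodule.orthogonal_orthogonal_eq_closure,
      Submodule.triorthogonal_eq_orthogonal]
  -- ker A = (range A†)ᗮ
  have hker : ∀ x : H, A x = 0 ↔ x ∈ (LinearMap.range (adjoint A : K →ₗ[ℂ] H))ᗮ := by
    intro x
    constructor
    · intro hx
      rintro _ ⟨y, rfl⟩
      rw [ContinuousLinearMap.coe_coe, adjoint_inner_left, hx, inner_zero_right]
    · intro hx
      rw [← inner_self_eq_zero (𝕜 := ℂ), ← adjoint_inner_left]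
      exact hx _ ⟨A x, rfl⟩
  intro X
  constructor
  · intro hX
    refine ⟨X - D, ?_⟩
    ext x
    set v := X x - D x with hv
    have h1 : A v = 0 := by
      have := congrFun (congrArg DFunLike.coe (hX.trans hD1.symm)) x
      simp only [coe_comp', Function.comp_apply] at this
      simp [hv, map_sub, this]
    have hmem : v ∈ Sᗮ := hSorth ▸ (hker _).mp h1
    have hP : (adjoint U ∘L U) v = 0 := by
      rw [hU2]
      simp only [coe_comp', Function.comp_apply, ← hS,
        Submodule.orthogonalProjectionOnto_apply_of_mem_orthogonal (K := (LinearMap.range (adjoint A : K →ₗ[ℂ] H)).topologicalClosure) hmem, map_zero]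
    simp only [add_apply, coe_comp', Function.comp_apply, sub_apply, one_apply]
    rw [show (adjoint U) (U v) = 0 from hP]
    simp [hv]
  · rintro ⟨Y, rfl⟩
    rw [comp_add, hD1, ← comp_assoc]
    suffices h : A ∘L (1 - adjoint U ∘L U) = 0 by rw [h, zero_comp, add_zero]
    ext x
    have hmem : (1 - adjoint U ∘L U) x ∈ (LinearMap.range (adjoint A : K →ₗ[ℂ] H))ᗮ := by
      rw [← hSorth]
      have : (1 - adjoint U ∘L U) x = x - (Submodule.orthogonalProjectionOnto S x : H) := by
        simp [hU2]; rfl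
      rw [this]
      exact Submodule.sub_starProjection_mem_orthogonal (K := S) x
    simpa using (hker _).mpr hmem
end

section
/- Let H, K be Hilbert spaces, A, C : H →L[ℂ] K with range C ⊆ range A, D the reduced solution of A X = C, and P the orthogonal projection onto closure(range A*). Then D ∘L P is self-adjoint if and only if C ∘L A* is self-adjoint. -/
open ContinuousLinearMap

theorem reduced_solution_selfAdjoint_iff
    {H K : Type*} [NormedAddCommGroup H] [InnerProductSpace ℂ H] [CompleteSpace H]
    [NormedAddCommGroup K] [InnerProductSpace ℂ K] [CompleteSpace K]
    (A C : H →L[ℂ] K) (D : H →L[ℂ] H)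
    (hrange : (LinearMap.range (C : H →ₗ[ℂ] K) : Set K) ⊆ (LinearMap.range (A : H →ₗ[ℂ] K) : Set K))
    (hD1 : A ∘L D = C)
    (hD2 : (LinearMap.range (D : H →ₗ[ℂ] H) : Set H) ⊆ closure (LinearMap.range (adjoint A : K →ₗ[ℂ] H) : Set H)) :
    IsSelfAdjoint (D ∘L ((LinearMap.range (adjoint A : K →ₗ[ℂ] H)).topologicalClosure.subtypeL ∘L
        Submodule.orthogonalProjectionOnto (LinearMap.range (adjoint A : K →ₗ[ℂ] H)).topologicalClosure)) ↔
      IsSelfAdjoint (C ∘L adjoint A) := by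
  set M := (LinearMap.range (adjoint A : K →ₗ[ℂ] H)).topologicalClosure with hMdef
  set Q : H →L[ℂ] H := M.subtypeL ∘L Submodule.orthogonalProjectionOnto M with hQdef
  have hQsa : IsSelfAdjoint Q := isSelfAdjoint_starProjection M
  have hMcoe : (M : Set H) = closure (LinearMap.range (adjoint A : K →ₗ[ℂ] H) : Set H) :=
    (LinearMap.range (adjoint A : K →ₗ[ℂ] H)).topologicalClosure_coe
  have hQmem : ∀ x ∈ M, Q x = x := by
    intro x hx
    have := Submodule.orthogonalProjectionOnto_mem_subspace_eq_self (⟨x, hx⟩ : M)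
    simp only [hQdef, coe_comp', Function.comp_apply, Submodule.coe_subtypeL',
      Submodule.coe_subtype]
    rw [this]
  have hQinM : ∀ x : H, Q x ∈ M := fun x => by
    simp only [hQdef, coe_comp', Function.comp_apply, Submodule.coe_subtypeL',
      Submodule.coe_subtype]
    exact Submodule.coe_mem _
  have hAdjmem : ∀ y : K, adjoint A y ∈ M :=
    fun y => (LinearMap.range (adjoint A : K →ₗ[ℂ] H)).le_topologicalClosure ⟨y, rfl⟩
  have hDmem : ∀ x : H, D x ∈ M := fun x => by
    rw [← SetLike.mem_coe, hMcoe]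
    exact hD2 ⟨x, rfl⟩
  have hQinner : ∀ x y : H, inner ℂ (Q x) y = (inner ℂ x (Q y) : ℂ) := fun x y => by
    conv_lhs => rw [← hQsa.adjoint_eq]
    rw [adjoint_inner_left]
  constructor
  · intro h
    have hEq : C ∘L adjoint A = A ∘L (D ∘L Q) ∘L adjoint A := by
      ext x
      simp only [coe_comp', Function.comp_apply, ← hD1]
      rw [hQmem _ (hAdjmem x)]
    rw [isSelfAdjoint_iff'] at *
    rw [hEq, adjoint_comp, adjoint_comp, adjoint_adjoint, h]
    rfl
  · intro h
    rw [isSelfAdjoint_iff'] at h ⊢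
    symm
    rw [eq_adjoint_iff]
    have key : ∀ u ∈ M, ∀ v ∈ M, inner ℂ (D u) v = (inner ℂ u (D v) : ℂ) := by
      intro u hu v hv
      have hS : IsClosed {p : H × H | inner ℂ (D p.1) p.2 = (inner ℂ p.1 (D p.2) : ℂ)} := by
        apply isClosed_eq
        · exact Continuous.inner (D.continuous.comp continuous_fst) continuous_snd
        · exact Continuous.inner continuous_fst (D.continuous.comp continuous_snd)
      have hsub : (LinearMap.range (adjoint A : K →ₗ[ℂ] H) : Set H) ×ˢ
          (LinearMap.range (adjoint A : K →ₗ[ℂ] H) : Set H) ⊆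
          {p : H × H | inner ℂ (D p.1) p.2 = (inner ℂ p.1 (D p.2) : ℂ)} := by
        rintro ⟨u, v⟩ ⟨⟨a, rfl⟩, ⟨b, rfl⟩⟩
        simp only [Set.mem_setOf_eq]
        have h1 : inner ℂ (D (adjoint A a)) (adjoint A b) = (inner ℂ ((C ∘L adjoint A) a) b : ℂ) := by
          rw [adjoint_inner_right, ← hD1]; rfl
        have h2 : inner ℂ (adjoint A a) (D (adjoint A b)) = (inner ℂ a ((C ∘L adjoint A) b) : ℂ) := by
          rw [adjoint_inner_left, ← hD1]; rfl
        change inner ℂ (D (adjoint A a)) (adjoint A b) = inner ℂ (adjoint A a) (D (adjoint A b))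
        rw [h1, h2]
        nth_rewrite 1 [← h]
        rw [adjoint_inner_left]
      have hmem : (u, v) ∈ closure ((LinearMap.range (adjoint A : K →ₗ[ℂ] H) : Set H) ×ˢ
          (LinearMap.range (adjoint A : K →ₗ[ℂ] H) : Set H)) := by
        rw [closure_prod_eq]
        exact ⟨by rw [← hMcoe]; exact hu, by rw [← hMcoe]; exact hv⟩
      exact closure_minimal hsub hS hmem
    intro x y
    have hx1 : ((D ∘L Q) x : H) = D (Q x) := rfl
    have hy1 : ((D ∘L Q) y : H) = D (Q y) := rfl
    rw [hx1, hy1]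
    calc inner ℂ (D (Q x)) y = (inner ℂ (Q (D (Q x))) y : ℂ) := by rw [hQmem _ (hDmem _)]
      _ = inner ℂ (D (Q x)) (Q y) := by rw [hQinner]
      _ = inner ℂ (Q x) (D (Q y)) := key _ (hQinM x) _ (hQinM y)
      _ = inner ℂ x (Q (D (Q y))) := by rw [hQinner]
      _ = inner ℂ x (D (Q y)) := by rw [hQmem _ (hDmem _)]
end

section
/- Let H, K be Hilbert spaces, A, C : H →L[ℂ] K with range C ⊆ range A, D the reduced solution of A X = C, and P the orthogonal projection onto closure(range A*). Then D ∘L P is a positive operator if and only if C ∘L A* is a positive operator. -/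
open ContinuousLinearMap

theorem reduced_solution_positive_iff
    {H K : Type*} [NormedAddCommGroup H] [InnerProductSpace ℂ H] [CompleteSpace H]
    [NormedAddCommGroup K] [InnerProductSpace ℂ K] [CompleteSpace K]
    (A C : H →L[ℂ] K) (D : H →L[ℂ] H)
    (hrange : (LinearMap.range (C : H →ₗ[ℂ] K) : Set K) ⊆ (LinearMap.range (A : H →ₗ[ℂ] K) : Set K))
    (hD1 : A ∘L D = C)
    (hD2 : (LinearMap.range (D : H →ₗ[ℂ] H) : Set H) ⊆ closure (LinearMap.range (adjoint A : K →ₗ[ℂ] H) : Set H)) :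
    (D ∘L ((LinearMap.range (adjoint A : K →ₗ[ℂ] H)).topologicalClosure.subtypeL ∘L
        Submodule.orthogonalProjectionOnto (LinearMap.range (adjoint A : K →ₗ[ℂ] H)).topologicalClosure)).IsPositive ↔
      (C ∘L adjoint A).IsPositive := by
  set S := (LinearMap.range (adjoint A : K →ₗ[ℂ] H)).topologicalClosure with hS
  have hmemS : ∀ x : K, adjoint A x ∈ S := fun x =>
    Submodule.le_topologicalClosure _ (LinearMap.mem_range_self _ x)
  -- key identity : ⟪(C ∘L A*) x, x⟫ = ⟪D (A* x), A* x⟫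
  have hkey : ∀ x : K,
      (inner ℂ ((C ∘L adjoint A) x) x : ℂ) = inner ℂ (D (adjoint A x)) (adjoint A x) := by
    intro x
    have : C (adjoint A x) = A (D (adjoint A x)) := by rw [← hD1]; rfl
    simp only [comp_apply, this]
    rw [← adjoint_inner_right]
  rw [isPositive_iff_complex, isPositive_iff_complex]
  constructor
  · intro h x
    have hx := h (adjoint A x)
    have hP : ((S.orthogonalProjectionOnto (adjoint A x) : H)) = adjoint A x :=
      Submodule.starProjection_eq_self_iff.mpr (hmemS x)
    simp only [comp_apply, Submodule.subtypeL_apply, hP] at hx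
    rw [hkey x]
    rw [hP] at hx
    exact hx
  · intro h y
    -- the predicate holds on closure of range A*
    have hclos : ∀ z ∈ (S : Set H),
        ((Complex.re (inner ℂ (D z) z : ℂ) : ℂ) = inner ℂ (D z) z ∧
          0 ≤ Complex.re (inner ℂ (D z) z : ℂ)) := by
      have hSset : (S : Set H) = closure (LinearMap.range (adjoint A : K →ₗ[ℂ] H) : Set H) :=
        (LinearMap.range (adjoint A : K →ₗ[ℂ] H)).topologicalClosure_coe
      rw [hSset]
      have hcont : Continuous fun z : H => (inner ℂ (D z) z : ℂ) :=
        Continuous.inner (D.continuous) continuous_id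
      have hcl : IsClosed {z : H |
          (Complex.re (inner ℂ (D z) z : ℂ) : ℂ) = inner ℂ (D z) z ∧
            0 ≤ Complex.re (inner ℂ (D z) z : ℂ)} := by
        apply IsClosed.inter
        · exact isClosed_eq (by continuity) hcont
        · exact isClosed_le continuous_const (Complex.continuous_re.comp hcont)
      apply closure_minimal _ hcl
      rintro _ ⟨x, rfl⟩
      have := h x
      rw [hkey x] at this
      exact this
    have hPy : (S.orthogonalProjectionOnto y : H) ∈ (S : Set H) := (S.orthogonalProjectionOnto y).2
    have hDPy : D (S.orthogonalProjectionOnto y : H) ∈ S := by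
      rw [← SetLike.mem_coe, (LinearMap.range (adjoint A : K →ₗ[ℂ] H)).topologicalClosure_coe]
      exact hD2 (LinearMap.mem_range_self _ _)
    have horth : (inner ℂ (D (S.orthogonalProjectionOnto y : H))
        (y - (S.orthogonalProjectionOnto y : H)) : ℂ) = 0 :=
      Submodule.inner_right_of_mem_orthogonal hDPy
        (Submodule.sub_starProjection_mem_orthogonal y)
    have hsplit : (inner ℂ ((D ∘L (S.subtypeL ∘L S.orthogonalProjectionOnto)) y) y : ℂ) =
        inner ℂ (D (S.orthogonalProjectionOnto y : H)) (S.orthogonalProjectionOnto y : H) := by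
      simp only [comp_apply, Submodule.subtypeL_apply]
      rw [← sub_eq_zero, ← inner_sub_right]
      exact horth
    rw [hsplit]
    exact hclos _ hPy
end

section
/- Let H, K be Hilbert spaces, A, C : H →L[ℂ] K with range C ⊆ range A, D the reduced solution of A X = C, and P the orthogonal projection onto closure(range A*). If C ∘L A* is self-adjoint and has closed range, then D ∘L P has closed range. -/
open ContinuousLinearMap

theorem reduced_solution_closed_range
    {H K : Type*} [NormedAddCommGroup H] [InnerProductSpace ℂ H] [CompleteSpace H]
    [NormedAddCommGroup K] [InnerProductSpace ℂ K] [CompleteSpace K]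
    (A C : H →L[ℂ] K) (D : H →L[ℂ] H)
    (hrange : (LinearMap.range (C : H →ₗ[ℂ] K) : Set K) ⊆ (LinearMap.range (A : H →ₗ[ℂ] K) : Set K))
    (hD1 : A ∘L D = C)
    (hD2 : (LinearMap.range (D : H →ₗ[ℂ] H) : Set H) ⊆ closure (LinearMap.range (adjoint A : K →ₗ[ℂ] H) : Set H))
    (hsa : IsSelfAdjoint (C ∘L adjoint A))
    (hclosed : IsClosed (LinearMap.range (C ∘L adjoint A : K →ₗ[ℂ] K) : Set K)) :
    IsClosed (LinearMap.range ((D ∘L ((LinearMap.range (adjoint A : K →ₗ[ℂ] H)).topologicalClosure.subtypeL ∘L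
      Submodule.orthogonalProjectionOnto (LinearMap.range (adjoint A : K →ₗ[ℂ] H)).topologicalClosure) : H →ₗ[ℂ] H)) : Set H) := by
  classical
  set N := (LinearMap.range (adjoint A : K →ₗ[ℂ] H)).topologicalClosure with hN
  set S : K →L[ℂ] H := D ∘L adjoint A with hS
  set B : K →L[ℂ] K := C ∘L adjoint A with hB
  have hAS : A ∘L S = B := by
    rw [hS, hB, ← hD1, comp_assoc]
  -- elements of N that are in ker A are zero
  have hNker : ∀ x : H, x ∈ N → A x = 0 → x = 0 := by
    intro x hxN hxA
    have hxO : x ∈ (LinearMap.range (adjoint A : K →ₗ[ℂ] H))ᗮᗮ := by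
      rw [Submodule.orthogonal_orthogonal_eq_closure]; exact hxN
    have hxO' : x ∈ (LinearMap.range (adjoint A : K →ₗ[ℂ] H))ᗮ := by
      intro u hu
      obtain ⟨y, rfl⟩ := hu
      rw [ContinuousLinearMap.coe_coe, adjoint_inner_left, hxA, inner_zero_right]
    have h0 : (inner ℂ x x : ℂ) = 0 := hxO x hxO'
    exact inner_self_eq_zero.mp h0
  -- ker B = ker S
  have hkerBS : ∀ x : K, B x = 0 ↔ S x = 0 := by
    intro x
    constructor
    · intro hx
      have hAx : A (S x) = 0 := by
        have := congrArg (fun f : K →L[ℂ] K => f x) hAS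
        simpa using this.trans hx
      have hmem : S x ∈ N := by
        have : S x ∈ (LinearMap.range (D : H →ₗ[ℂ] H) : Set H) := ⟨adjoint A x, rfl⟩
        have h2 := hD2 this
        rwa [← Submodule.topologicalClosure_coe] at h2
      exact hNker _ hmem hAx
    · intro hx
      have := congrArg (fun f : K →L[ℂ] K => f x) hAS
      rw [← this]
      simp [comp_apply] at hx ⊢
      rw [hx]; simp
  -- B is self-adjoint
  have hBsa : adjoint B = B := (isSelfAdjoint_iff' (𝕜 := ℂ)).mp hsa
  -- range B as a submodule, closed
  set R : Submodule ℂ K := LinearMap.range (B : K →ₗ[ℂ] K) with hR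
  have hRclosed : IsClosed (R : Set K) := hclosed
  haveI : CompleteSpace R := hRclosed.completeSpace_coe
  -- (ker B)ᗮ = R
  have hkerOrth : (LinearMap.ker (B : K →ₗ[ℂ] K) : Submodule ℂ K) = Rᗮ := by
    ext y
    constructor
    · intro hy u hu
      obtain ⟨x, rfl⟩ := hu
      rw [ContinuousLinearMap.coe_coe, ← adjoint_inner_right, hBsa]
      rw [LinearMap.mem_ker, ContinuousLinearMap.coe_coe] at hy
      rw [hy, inner_zero_right]
    · intro hy
      rw [LinearMap.mem_ker]
      have h1 : ∀ x : K, (inner ℂ (B x) y : ℂ) = 0 := fun x => hy (B x) ⟨x, rfl⟩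
      have h4 : ∀ x : K, (inner ℂ x (B y) : ℂ) = 0 := fun x => by
        have h5 := adjoint_inner_right B x y
        rw [hBsa] at h5
        exact h5.trans (h1 x)
      exact inner_self_eq_zero.mp (h4 (B y))
  have hRorth : R = (LinearMap.ker (B : K →ₗ[ℂ] K))ᗮ := by
    rw [hkerOrth, Submodule.orthogonal_orthogonal_eq_closure,
      hRclosed.submodule_topologicalClosure_eq]
  -- decomposition
  have hdecomp : ∀ x : K, ∃ u ∈ LinearMap.ker (B : K →ₗ[ℂ] K), ∃ v ∈ R, x = u + v := by
    intro x
    obtain ⟨u, hu, v, hv, hx⟩ := (LinearMap.ker (B : K →ₗ[ℂ] K)).exists_add_mem_mem_orthogonal x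
    exact ⟨u, hu, v, hRorth ▸ hv, hx.symm ▸ rfl⟩
  -- B restricted to R is bijective R → R
  have hBmapsR : ∀ v : K, B v ∈ R := fun v => ⟨v, rfl⟩
  set B' : R →L[ℂ] R := (B ∘L R.subtypeL).codRestrict R (fun v => hBmapsR _) with hB'
  have hB'inj : LinearMap.ker (B' : R →ₗ[ℂ] R) = ⊥ := by
    rw [Submodule.eq_bot_iff]
    rintro ⟨v, hv⟩ hker
    have hBv : B v = 0 := by
      have := congrArg (Subtype.val) hker
      exact this
    have hvker : v ∈ LinearMap.ker (B : K →ₗ[ℂ] K) := hBv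
    have hvorth : v ∈ (LinearMap.ker (B : K →ₗ[ℂ] K))ᗮ := hRorth ▸ hv
    have h0 : (inner ℂ v v : ℂ) = 0 := hvorth v hvker
    ext
    exact inner_self_eq_zero.mp h0
  have hB'surj : LinearMap.range (B' : R →ₗ[ℂ] R) = ⊤ := by
    rw [Submodule.eq_top_iff']
    rintro ⟨y, hy⟩
    obtain ⟨x, rfl⟩ := hy
    obtain ⟨u, hu, v, hv, hx⟩ := hdecomp x
    refine ⟨⟨v, hv⟩, ?_⟩
    ext
    have : B x = B v := by
      rw [hx, map_add]
      rw [LinearMap.mem_ker, ContinuousLinearMap.coe_coe] at hu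
      rw [hu, zero_add]
    exact this.symm
  set e := ContinuousLinearEquiv.ofBijective B' hB'inj hB'surj with he
  -- the bound
  set c : NNReal := ‖(e.symm : R →L[ℂ] R)‖₊ * ‖A‖₊ with hc
  set T : R →L[ℂ] H := S ∘L R.subtypeL with hT
  have hbound : ∀ v : R, ‖v‖ ≤ (c : ℝ) * ‖T v‖ := by
    intro v
    have h1 : ‖v‖ ≤ ‖(e.symm : R →L[ℂ] R)‖ * ‖B' v‖ := by
      have : v = e.symm (e v) := (e.symm_apply_apply v).symm
      calc ‖v‖ = ‖e.symm (e v)‖ := by rw [← this]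
        _ ≤ ‖(e.symm : R →L[ℂ] R)‖ * ‖e v‖ := (e.symm : R →L[ℂ] R).le_opNorm _
        _ = ‖(e.symm : R →L[ℂ] R)‖ * ‖B' v‖ := by congr 1
    have h2 : ‖B' v‖ = ‖B (v : K)‖ := rfl
    have h3 : B (v : K) = A (S (v : K)) := by
      have := congrArg (fun f : K →L[ℂ] K => f (v : K)) hAS
      simpa using this.symm
    have h4 : ‖B (v : K)‖ ≤ ‖A‖ * ‖T v‖ := by
      rw [h3]
      exact A.le_opNorm _
    calc ‖v‖ ≤ ‖(e.symm : R →L[ℂ] R)‖ * ‖B' v‖ := h1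
      _ = ‖(e.symm : R →L[ℂ] R)‖ * ‖B (v : K)‖ := by rw [h2]
      _ ≤ ‖(e.symm : R →L[ℂ] R)‖ * (‖A‖ * ‖T v‖) := by
          apply mul_le_mul_of_nonneg_left h4 (norm_nonneg _)
      _ = (c : ℝ) * ‖T v‖ := by rw [hc]; push_cast; ring
  have hanti : AntilipschitzWith c T := T.antilipschitz_of_bound hbound
  have hTclosed : IsClosed (Set.range T) := hanti.isClosed_range T.uniformContinuous
  -- range T = range S (as sets)
  have hrangeTS : Set.range T = (LinearMap.range (S : K →ₗ[ℂ] H) : Set H) := by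
    ext y
    constructor
    · rintro ⟨v, rfl⟩; exact ⟨(v : K), rfl⟩
    · rintro ⟨x, rfl⟩
      obtain ⟨u, hu, v, hv, hx⟩ := hdecomp x
      refine ⟨⟨v, hv⟩, ?_⟩
      have hSu : S u = 0 := (hkerBS u).mp hu
      show S v = S x
      rw [hx, map_add, hSu, zero_add]
  have hSclosed : IsClosed (LinearMap.range (S : K →ₗ[ℂ] H) : Set H) := hrangeTS ▸ hTclosed
  -- finally: range (D ∘L Q) = range S as sets
  have hQfix : ∀ x : H, x ∈ N →
      (N.subtypeL ∘L Submodule.orthogonalProjectionOnto N) x = x := by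
    intro x hx
    have := Submodule.orthogonalProjectionOnto_mem_subspace_eq_self (K := N) ⟨x, hx⟩
    calc (N.subtypeL ∘L Submodule.orthogonalProjectionOnto N) x
        = (Submodule.orthogonalProjectionOnto N x : H) := rfl
      _ = x := by rw [this]
  have hkey : (LinearMap.range (D ∘L (N.subtypeL ∘L Submodule.orthogonalProjectionOnto N) : H →ₗ[ℂ] H) : Set H)
      = (LinearMap.range (S : K →ₗ[ℂ] H) : Set H) := by
    apply Set.Subset.antisymm
    · rintro y ⟨x, rfl⟩
      -- D (Q x) with Q x ∈ N = closure (range A*)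
      have hQx : (N.subtypeL ∘L Submodule.orthogonalProjectionOnto N) x ∈ (N : Set H) :=
        ((Submodule.orthogonalProjectionOnto N x) : N).2
      rw [Submodule.topologicalClosure_coe] at hQx
      have himg : D ((N.subtypeL ∘L Submodule.orthogonalProjectionOnto N) x) ∈
          closure (D '' (LinearMap.range (adjoint A : K →ₗ[ℂ] H) : Set H)) :=
        (image_closure_subset_closure_image D.continuous) ⟨_, hQx, rfl⟩
      have himgeq : D '' (LinearMap.range (adjoint A : K →ₗ[ℂ] H) : Set H)
          = (LinearMap.range (S : K →ₗ[ℂ] H) : Set H) := by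
        ext z
        constructor
        · rintro ⟨w, ⟨k, rfl⟩, rfl⟩; exact ⟨k, rfl⟩
        · rintro ⟨k, rfl⟩; exact ⟨adjoint A k, ⟨k, rfl⟩, rfl⟩
      rw [himgeq, hSclosed.closure_eq] at himg
      exact himg
    · rintro y ⟨k, rfl⟩
      refine ⟨adjoint A k, ?_⟩
      show D ((N.subtypeL ∘L Submodule.orthogonalProjectionOnto N) (adjoint A k)) = S k
      rw [hQfix (adjoint A k) (Submodule.le_topologicalClosure _ ⟨k, rfl⟩)]
      rfl
  show IsClosed (LinearMap.range (D ∘L (N.subtypeL ∘L Submodule.orthogonalProjectionOnto N) : H →ₗ[ℂ] H) : Set H)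
  rw [hkey]
  exact hSclosed
end

section
/- Let H, K be Hilbert spaces and A, C : H →L[ℂ] K. If range C ⊆ range A and C ∘L A* is self-adjoint, then there exists a self-adjoint X : H →L[ℂ] H with A ∘L X = C. Moreover, X may be taken of the form D + (1 - P) ∘L D*, where D is the reduced solution of A X = C and P is the projection onto closure(range A*). -/
open ContinuousLinearMap
open scoped InnerProductSpace

theorem hermitian_solution_sufficient
    {H K : Type*} [NormedAddCommGroup H] [InnerProductSpace ℂ H] [CompleteSpace H]
    [NormedAddCommGroup K] [InnerProductSpace ℂ K] [CompleteSpace K]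
    (A C : H →L[ℂ] K) (D : H →L[ℂ] H)
    (hrange : (LinearMap.range (C : H →ₗ[ℂ] K) : Set K) ⊆ (LinearMap.range (A : H →ₗ[ℂ] K) : Set K))
    (hsa : IsSelfAdjoint (C ∘L adjoint A))
    (hD1 : A ∘L D = C)
    (hD2 : (LinearMap.range (D : H →ₗ[ℂ] H) : Set H) ⊆ closure (LinearMap.range (adjoint A : K →ₗ[ℂ] H) : Set H)) :
    ∃ X : H →L[ℂ] H, IsSelfAdjoint X ∧ A ∘L X = C ∧
      X = D + (1 - ((LinearMap.range (adjoint A : K →ₗ[ℂ] H)).topologicalClosure.subtypeL ∘L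
        Submodule.orthogonalProjectionOnto (LinearMap.range (adjoint A : K →ₗ[ℂ] H)).topologicalClosure)) ∘L adjoint D := by
  set M : Submodule ℂ H := (LinearMap.range (adjoint A : K →ₗ[ℂ] H)).topologicalClosure with hM
  set P : H →L[ℂ] H := M.subtypeL ∘L M.orthogonalProjectionOnto with hPdef
  have hPsa : IsSelfAdjoint P := isSelfAdjoint_starProjection M
  have hPmem : ∀ x ∈ M, P x = x := by
    intro x hx
    simp only [hPdef, comp_apply, Submodule.subtypeL_apply]
    exact Submodule.starProjection_eq_self_iff.mpr hx
  have hDmem : ∀ x, D x ∈ M := by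
    intro x
    have : D x ∈ closure (LinearMap.range (adjoint A : K →ₗ[ℂ] H) : Set H) :=
      hD2 ⟨x, rfl⟩
    rwa [← Submodule.topologicalClosure_coe] at this
  have hPD : ∀ x, P (D x) = D x := fun x => hPmem _ (hDmem x)
  -- elements of Mᗮ are killed by A
  have hkerA : ∀ z ∈ Mᗮ, A z = 0 := by
    intro z hz
    have hm : adjoint A (A z) ∈ M :=
      Submodule.le_topologicalClosure _ ⟨A z, rfl⟩
    have h1 : ⟪A z, A z⟫_ℂ = 0 := by
      rw [← adjoint_inner_right A]
      exact (Submodule.mem_orthogonal' M z).mp hz _ hm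
    exact inner_self_eq_zero.mp h1
  -- ker A ⊆ Mᗮ
  have hker' : ∀ w, A w = 0 → w ∈ Mᗮ := by
    intro w hw
    rw [Submodule.mem_orthogonal]
    intro u hu
    have hsubset : (LinearMap.range (adjoint A : K →ₗ[ℂ] H) : Set H) ⊆ {u | ⟪u, w⟫_ℂ = 0} := by
      rintro _ ⟨y, rfl⟩
      simp [adjoint_inner_left, hw]
    have hclosed : IsClosed {u | ⟪u, w⟫_ℂ = 0} :=
      isClosed_eq (continuous_id.inner continuous_const) continuous_const
    have hu' : u ∈ (M : Set H) := hu
    rw [hM, Submodule.topologicalClosure_coe] at hu'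
    exact closure_minimal hsubset hclosed hu'
  have hPzero : ∀ w ∈ Mᗮ, P w = 0 := by
    intro w hw
    simp only [hPdef, comp_apply, Submodule.subtypeL_apply]
    rw [Submodule.orthogonalProjectionOnto_apply_of_mem_orthogonal hw]
    simp
  -- A ∘L (1 - P) = 0
  have hA1P : ∀ x, A (x - P x) = 0 := by
    intro x
    apply hkerA
    exact Submodule.sub_starProjection_mem_orthogonal (K := M) x
  -- the key commutation identity
  have h0 : ∀ y, A (adjoint D (adjoint A y)) = A (D (adjoint A y)) := by
    intro y
    have h1 : adjoint (C ∘L adjoint A) = C ∘L adjoint A := hsa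
    rw [adjoint_comp, adjoint_adjoint, ← hD1, adjoint_comp] at h1
    have := congrArg (fun T : K →L[ℂ] K => T y) h1
    simpa [comp_apply] using this
  have hkey : P ∘L adjoint D = D ∘L P := by
    have hDadj : ∀ z ∈ Mᗮ, adjoint D z ∈ Mᗮ := by
      intro z hz
      rw [Submodule.mem_orthogonal]
      intro u hu
      rw [adjoint_inner_right]
      exact (Submodule.mem_orthogonal M z).mp hz _ (hDmem u)
    have hEqM : ∀ z ∈ M, P (adjoint D z) = D (P z) := by
      intro z hz
      have hsubset : (LinearMap.range (adjoint A : K →ₗ[ℂ] H) : Set H) ⊆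
          {z | P (adjoint D z) = D (P z)} := by
        rintro _ ⟨y, rfl⟩
        have hw : (D (adjoint A y)) - (adjoint D (adjoint A y)) ∈ Mᗮ := by
          apply hker'
          simp [map_sub, h0 y]
        have := hPzero _ hw
        rw [map_sub] at this
        have hPz : P (adjoint A y) = adjoint A y :=
          hPmem _ (Submodule.le_topologicalClosure _ ⟨y, rfl⟩)
        show P (adjoint D (adjoint A y)) = D (P (adjoint A y))
        rw [hPz, ← hPD (adjoint A y)]
        exact (sub_eq_zero.mp this).symm
      have hclosed : IsClosed {z : H | P (adjoint D z) = D (P z)} :=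
        isClosed_eq (by fun_prop) (by fun_prop)
      have hz' : z ∈ (M : Set H) := hz
      rw [hM, Submodule.topologicalClosure_coe] at hz'
      exact closure_minimal hsubset hclosed hz'
    ext x
    have hdecomp : x = P x + (x - P x) := by abel
    have h1 : P x ∈ M := by
      simp only [hPdef, comp_apply, Submodule.subtypeL_apply]
      exact (M.orthogonalProjectionOnto x).2
    have h2 : x - P x ∈ Mᗮ := Submodule.sub_starProjection_mem_orthogonal (K := M) x
    calc P (adjoint D x) = P (adjoint D (P x + (x - P x))) := by rw [← hdecomp]
      _ = P (adjoint D (P x)) + P (adjoint D (x - P x)) := by rw [map_add, map_add]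
      _ = D (P (P x)) + 0 := by
          rw [hEqM _ h1, hPzero _ (hDadj _ h2)]
      _ = D (P x) := by rw [add_zero, hPmem _ h1]
  refine ⟨D + (1 - P) ∘L adjoint D, ?_, ?_, rfl⟩
  · rw [ContinuousLinearMap.isSelfAdjoint_iff']
    have h1P : IsSelfAdjoint ((1 : H →L[ℂ] H) - P) :=
      (IsSelfAdjoint.one (R := H →L[ℂ] H)).sub hPsa
    rw [map_add, adjoint_comp, adjoint_adjoint, h1P.adjoint_eq]
    ext x
    have := congrArg (fun T : H →L[ℂ] H => T x) hkey
    simp only [comp_apply] at this ⊢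
    simp only [add_apply, comp_apply, sub_apply, ContinuousLinearMap.one_apply, map_sub]
    rw [this]
    abel
  · ext x
    simp only [comp_apply, add_apply, map_add]
    rw [← hD1]
    simp only [comp_apply, sub_apply, ContinuousLinearMap.one_apply]
    rw [hA1P (adjoint D x)]
    simp
end

section
/- Let H, K be Hilbert spaces and A, C : H →L[ℂ] K. If range C ⊆ range A and there exists t > 0 with C ∘L C* ≤ t • (C ∘L A*) in the Loewner order, then there exists a positive operator X : H →L[ℂ] H with A ∘L X = C. -/
open ContinuousLinearMap

set_option maxHeartbeats 4000000

theorem positive_solution_sufficient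
    {H K : Type*} [NormedAddCommGroup H] [InnerProductSpace ℂ H] [CompleteSpace H]
    [NormedAddCommGroup K] [InnerProductSpace ℂ K] [CompleteSpace K]
    (A C : H →L[ℂ] K) (t : ℝ) (ht : 0 < t)
    (hrange : (LinearMap.range (C : H →ₗ[ℂ] K) : Set K) ⊆ (LinearMap.range (A : H →ₗ[ℂ] K) : Set K))
    (hmaj : (t • (C ∘L adjoint A) - C ∘L adjoint C).IsPositive) :
    ∃ X : H →L[ℂ] H, X.IsPositive ∧ A ∘L X = C := by
  classical
  set A' := adjoint A with hA'def
  set C' := adjoint C with hC'def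
  -- `C ∘L A'` is self-adjoint
  have hCC'sa : IsSelfAdjoint (C ∘L C') := by
    rw [isSelfAdjoint_iff, star_eq_adjoint, adjoint_comp, adjoint_adjoint]
  have hCA'sa : IsSelfAdjoint (C ∘L A') := by
    have h1 := hmaj.isSelfAdjoint
    have h2 : IsSelfAdjoint (t • (C ∘L A')) := by
      have := h1.add hCC'sa
      simpa using this
    rw [isSelfAdjoint_iff] at h2 ⊢
    rw [star_smul, star_trivial] at h2
    have := smul_right_injective (K →L[ℂ] K) (ne_of_gt ht) h2
    exact this
  have hACCA : A ∘L C' = C ∘L A' := by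
    have := hCA'sa
    rw [isSelfAdjoint_iff, star_eq_adjoint, adjoint_comp, adjoint_adjoint] at this
    exact this
  -- the key inequality
  have hkey : ∀ y : K, ‖C' y‖ ^ 2 ≤ t * RCLike.re (inner ℂ (C' y) (A' y) : ℂ) := by
    intro y
    have h0 := hmaj.2 y
    rw [reApplyInnerSelf_apply] at h0
    have e0 : ((t • (C ∘L A') - C ∘L C') y) = ((RCLike.ofReal t : ℂ)) • (C (A' y)) - C (C' y) := by
      rw [ContinuousLinearMap.sub_apply, ContinuousLinearMap.smul_apply,
        ContinuousLinearMap.comp_apply, ContinuousLinearMap.comp_apply,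
        RCLike.real_smul_eq_coe_smul (K := ℂ)]
    rw [e0, inner_sub_left, inner_smul_left, RCLike.conj_ofReal] at h0
    have e1 : (inner ℂ (C (A' y)) y : ℂ) = inner ℂ (A' y) (C' y) := by
      rw [hC'def, adjoint_inner_right]
    have e2 : (inner ℂ (C (C' y)) y : ℂ) = inner ℂ (C' y) (C' y) := by
      rw [hC'def, adjoint_inner_right]
    rw [e1, e2, map_sub, RCLike.re_ofReal_mul] at h0
    have e3 : RCLike.re (inner ℂ (C' y) (C' y) : ℂ) = ‖C' y‖ ^ 2 := by
      rw [← inner_self_eq_norm_sq (𝕜 := ℂ)]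
    rw [inner_re_symm (𝕜 := ℂ)] at h0
    linarith
  -- hence ‖C' y‖ ≤ t * ‖A' y‖
  have hnorm : ∀ y : K, ‖C' y‖ ≤ t * ‖A' y‖ := by
    intro y
    have h1 := hkey y
    have h2 : RCLike.re (inner ℂ (C' y) (A' y) : ℂ) ≤ ‖C' y‖ * ‖A' y‖ := re_inner_le_norm _ _
    by_contra hlt
    push_neg at hlt
    have hcpos : 0 < ‖C' y‖ :=
      lt_of_le_of_lt (mul_nonneg ht.le (norm_nonneg _)) hlt
    nlinarith [mul_le_mul_of_nonneg_left h2 ht.le, mul_lt_mul_of_pos_left hlt hcpos]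
  -- abstract real arithmetic lemmas
  have key1 : ∀ w c : ℝ, 0 ≤ w → 0 ≤ c → w ^ 2 ≤ c * w → w ^ 2 ≤ c ^ 2 := by
    intro w c h1 h2 h3
    nlinarith [sq_nonneg (w - c)]
  have key2 : ∀ a b c r : ℝ, 0 ≤ a → 0 ≤ b → 0 ≤ c → c ^ 2 ≤ t * a → -(c * b) ≤ r →
      0 ≤ a + r + r + t * b ^ 2 := by
    intro a b c r h1 h2 h3 h4 h5
    nlinarith [sq_nonneg (c - t * b), mul_pos ht ht]
  -- well-definedness of the densely defined operator
  have hwd : ∀ y z : K, A' y = A' z → C' y = C' z := by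
    intro y z hyz
    have h2 : A' (y - z) = 0 := by rw [map_sub, hyz, sub_self]
    have h1 := hkey (y - z)
    rw [h2, inner_zero_right, map_zero, mul_zero] at h1
    have h3 : ‖C' (y - z)‖ = 0 := by nlinarith [norm_nonneg (C' (y - z))]
    have h4 : C' (y - z) = 0 := norm_eq_zero.mp h3
    rw [map_sub, sub_eq_zero] at h4
    exact h4
  -- the submodule M = closure of range A'
  set p : Submodule ℂ H := LinearMap.range (A' : K →ₗ[ℂ] H) with hpdef
  set M : Submodule ℂ H := p.topologicalClosure with hMdef
  haveI : CompleteSpace M := p.isClosed_topologicalClosure.completeSpace_coe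
  have hmem : ∀ y : K, A' y ∈ p := fun y => LinearMap.mem_range_self _ y
  have hmemM : ∀ y : K, A' y ∈ M := fun y => p.le_topologicalClosure (hmem y)
  have hrep : ∀ x : p, A' (Exists.choose (LinearMap.mem_range.mp x.2)) = (x : H) :=
    fun x => Exists.choose_spec (LinearMap.mem_range.mp x.2)
  set f : p → H := fun x => C' (Exists.choose (LinearMap.mem_range.mp x.2)) with hfdef
  have hf : ∀ (x : p) (y : K), A' y = (x : H) → f x = C' y := by
    intro x y hy
    exact hwd _ _ (by rw [hrep x, hy])
  set L₀ : p →ₗ[ℂ] H :=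
    { toFun := f
      map_add' := by
        intro x z
        exact (hf (x + z) (Exists.choose (LinearMap.mem_range.mp x.2)
            + Exists.choose (LinearMap.mem_range.mp z.2))
          (by rw [map_add, hrep, hrep, Submodule.coe_add])).trans (map_add C' _ _)
      map_smul' := by
        intro c x
        exact (hf (c • x) (c • Exists.choose (LinearMap.mem_range.mp x.2))
          (by rw [map_smul, hrep, Submodule.coe_smul])).trans (map_smul C' c _) } with hL₀def
  have hLb : ∀ x : p, ‖L₀ x‖ ≤ t * ‖x‖ := by
    intro x
    have h1 : L₀ x = C' (Exists.choose (LinearMap.mem_range.mp x.2)) := rfl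
    rw [h1]
    calc ‖C' (Exists.choose (LinearMap.mem_range.mp x.2))‖
        ≤ t * ‖A' (Exists.choose (LinearMap.mem_range.mp x.2))‖ := hnorm _
      _ = t * ‖x‖ := by rw [hrep]; rfl
  set L : p →L[ℂ] H := L₀.mkContinuous t hLb with hLdef
  set e : p →L[ℂ] M := (Submodule.inclusion p.le_topologicalClosure).mkContinuous 1
    (fun x => by rw [one_mul]; exact le_of_eq rfl) with hedef
  have he : IsUniformInducing e :=
    (AddMonoidHomClass.isometry_of_norm e fun x => rfl).isUniformInducing
  have hdense : DenseRange e := by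
    refine Topology.IsInducing.subtypeVal.dense_iff.2 fun x => ?_
    have hx : (x : H) ∈ closure (p : Set H) := x.2
    convert hx using 2
    rw [← Set.range_comp]
    ext v
    constructor
    · rintro ⟨w, rfl⟩
      exact w.2
    · intro hv
      exact ⟨⟨v, hv⟩, rfl⟩
  set X₀ : M →L[ℂ] H := L.extend e with hX₀def
  have hXe : ∀ x : p, X₀ (e x) = f x := by
    intro x
    exact ContinuousLinearMap.extend_eq (f := L) (e := e) hdense he x
  have hcoe : ∀ x : p, ((e x : M) : H) = (x : H) := fun x => rfl
  -- operators
  set Pm : H →L[ℂ] M := M.orthogonalProjectionOnto with hPmdef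
  set P : H →L[ℂ] H := M.subtypeL ∘L Pm with hPdef
  set Y : H →L[ℂ] H := X₀ ∘L Pm with hYdef
  set Q : H →L[ℂ] H := ContinuousLinearMap.id ℂ H - P with hQdef
  set X : H →L[ℂ] H := Y + (adjoint Y) ∘L Q + (RCLike.ofReal t : ℂ) • Q with hXdef
  -- basic facts about the projections
  have hQapp : ∀ u : H, Q u = u - (Pm u : H) := fun u => rfl
  have hQperp : ∀ u : H, Q u ∈ Mᗮ := by
    intro u
    exact M.sub_starProjection_mem_orthogonal u
  have hPM : ∀ u : H, (Pm u : H) ∈ M := fun u => (Pm u).2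
  have hMO : ∀ z : H, z ∈ Mᗮ → A z = 0 := by
    intro z hz
    have h1 : (inner ℂ (A z) (A z) : ℂ) = inner ℂ z (A' (A z)) := by
      rw [hA'def, adjoint_inner_right]
    have h2 : (inner ℂ z (A' (A z)) : ℂ) = 0 :=
      Submodule.inner_left_of_mem_orthogonal (hmemM (A z)) hz
    rw [h2] at h1
    exact inner_self_eq_zero.mp h1
  have hAQ : ∀ u : H, A (Q u) = 0 := fun u => hMO _ (hQperp u)
  -- X₀ on the canonical dense elements
  have hX₀A : ∀ y : K, X₀ ⟨A' y, hmemM y⟩ = C' y := by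
    intro y
    have h1 := hXe ⟨A' y, hmem y⟩
    have h2 : e ⟨A' y, hmem y⟩ = ⟨A' y, hmemM y⟩ := rfl
    rw [h2] at h1
    rw [h1]
    exact hf _ y rfl
  have hXe' : ∀ x : p, X₀ (e x) = C' (Exists.choose (LinearMap.mem_range.mp x.2)) :=
    fun x => hXe x
  -- A ∘ X₀ = C on M, by density
  have hAX₀ : ∀ m : M, A (X₀ m) = C (m : H) := by
    intro m
    refine hdense.induction_on m ?_ ?_
    · apply isClosed_eq
      · exact A.continuous.comp (X₀.continuous)
      · exact C.continuous.comp continuous_subtype_val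
    · intro x
      obtain ⟨y, hy⟩ : ∃ y, A' y = (x : H) := x.2
      have hXy : X₀ (e x) = C' y := (hXe' x).trans (hwd _ _ (by rw [hrep x, hy]))
      have h2 : ((e x : M) : H) = A' y := (hcoe x).trans hy.symm
      rw [hXy, h2]
      have := ContinuousLinearMap.ext_iff.mp hACCA y
      simpa using this
  -- A ∘ adjoint Y = C
  have hAY' : ∀ u : H, A ((adjoint Y) u) = C u := by
    intro u
    apply ext_inner_right ℂ
    intro y
    have h1 : (inner ℂ (A ((adjoint Y) u)) y : ℂ) = inner ℂ ((adjoint Y) u) (A' y) := by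
      rw [hA'def, adjoint_inner_right]
    have h2 : (inner ℂ ((adjoint Y) u) (A' y) : ℂ) = inner ℂ u (Y (A' y)) :=
      adjoint_inner_left Y (A' y) u
    have h3 : Y (A' y) = C' y := by
      have h4 : Pm (A' y) = ⟨A' y, hmemM y⟩ :=
        M.orthogonalProjectionOnto_mem_subspace_eq_self (⟨A' y, hmemM y⟩ : M)
      have h5 : Y (A' y) = X₀ (Pm (A' y)) := rfl
      rw [h5, h4, hX₀A]
    rw [h1, h2, h3, hC'def, adjoint_inner_right]
  -- symmetry of the form on M
  have hsymm : ∀ m m' : M, (inner ℂ (X₀ m) ((m' : H)) : ℂ) = inner ℂ ((m : H)) (X₀ m') := by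
    refine hdense.induction_on₂ ?_ ?_
    · apply isClosed_eq
      · exact Continuous.inner (X₀.continuous.comp continuous_fst)
          (continuous_subtype_val.comp continuous_snd)
      · exact Continuous.inner (continuous_subtype_val.comp continuous_fst)
          (X₀.continuous.comp continuous_snd)
    · intro x x'
      obtain ⟨y, hy⟩ : ∃ y, A' y = (x : H) := x.2
      obtain ⟨y', hy'⟩ : ∃ y'', A' y'' = (x' : H) := x'.2
      have hXy : X₀ (e x) = C' y := (hXe' x).trans (hwd _ _ (by rw [hrep x, hy]))
      have hXy' : X₀ (e x') = C' y' := (hXe' x').trans (hwd _ _ (by rw [hrep x', hy']))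
      have g2 : ((e x : M) : H) = A' y := (hcoe x).trans hy.symm
      have g2' : ((e x' : M) : H) = A' y' := (hcoe x').trans hy'.symm
      rw [hXy, hXy', g2, g2']
      have h1 : (inner ℂ (C' y) (A' y') : ℂ) = inner ℂ y (C (A' y')) := by
        rw [hC'def, adjoint_inner_left]
      have h2 : (inner ℂ (A' y) (C' y') : ℂ) = inner ℂ y (A (C' y')) := by
        rw [hA'def, adjoint_inner_left]
      have h3 : A (C' y') = C (A' y') := by
        have := ContinuousLinearMap.ext_iff.mp hACCA y'
        simpa using this
      rw [h1, h2, h3]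
  -- positivity facts on M
  have hpos1 : ∀ m : M, 0 ≤ RCLike.re (inner ℂ (X₀ m) ((m : H)) : ℂ) := by
    intro m
    refine hdense.induction_on m ?_ ?_
    · apply isClosed_le continuous_const
      exact RCLike.continuous_re.comp (Continuous.inner X₀.continuous continuous_subtype_val)
    · intro x
      obtain ⟨y, hy⟩ : ∃ y, A' y = (x : H) := x.2
      have hXy : X₀ (e x) = C' y := (hXe' x).trans (hwd _ _ (by rw [hrep x, hy]))
      have g2 : ((e x : M) : H) = A' y := (hcoe x).trans hy.symm
      rw [hXy, g2]
      nlinarith [hkey y, sq_nonneg ‖C' y‖]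
  have hpos2 : ∀ m : M, ‖X₀ m - P (X₀ m)‖ ^ 2 ≤ t * RCLike.re (inner ℂ (X₀ m) ((m : H)) : ℂ) := by
    intro m
    refine hdense.induction_on m ?_ ?_
    · apply isClosed_le
      · have hc : Continuous fun m : M => X₀ m - P (X₀ m) :=
          (X₀.continuous).sub (P.continuous.comp X₀.continuous)
        exact (hc.norm.pow 2)
      · exact continuous_const.mul (RCLike.continuous_re.comp
          (Continuous.inner X₀.continuous continuous_subtype_val))
    · intro x
      obtain ⟨y, hy⟩ : ∃ y, A' y = (x : H) := x.2
      have hXy : X₀ (e x) = C' y := (hXe' x).trans (hwd _ _ (by rw [hrep x, hy]))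
      have g2 : ((e x : M) : H) = A' y := (hcoe x).trans hy.symm
      rw [hXy, g2]
      have hperp : C' y - P (C' y) ∈ Mᗮ :=
        M.sub_starProjection_mem_orthogonal (C' y)
      have hz : (inner ℂ (P (C' y)) (C' y - P (C' y)) : ℂ) = 0 :=
        Submodule.inner_right_of_mem_orthogonal (hPM (C' y)) hperp
      have hsum : (inner ℂ (C' y) (C' y - P (C' y)) : ℂ)
          = inner ℂ (C' y - P (C' y)) (C' y - P (C' y)) := by
        have hdec : C' y = P (C' y) + (C' y - P (C' y)) := by abel
        nth_rewrite 1 [hdec]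
        rw [inner_add_left, hz, zero_add]
      have h1 : RCLike.re (inner ℂ (C' y - P (C' y)) (C' y - P (C' y)) : ℂ)
          = ‖C' y - P (C' y)‖ ^ 2 := by
        rw [← inner_self_eq_norm_sq (𝕜 := ℂ)]
      have h2 := re_inner_le_norm (𝕜 := ℂ) (C' y) (C' y - P (C' y))
      have h3 : ‖C' y - P (C' y)‖ ^ 2 ≤ ‖C' y‖ * ‖C' y - P (C' y)‖ := by
        rw [← h1, ← hsum]
        exact h2
      have hle : ‖C' y - P (C' y)‖ ^ 2 ≤ ‖C' y‖ ^ 2 :=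
        key1 _ _ (norm_nonneg _) (norm_nonneg _) h3
      calc ‖C' y - P (C' y)‖ ^ 2 ≤ ‖C' y‖ ^ 2 := hle
        _ ≤ t * RCLike.re (inner ℂ (C' y) (A' y) : ℂ) := hkey y
  -- the three components of X evaluated
  have hYapp : ∀ u : H, Y u = X₀ (Pm u) := fun u => rfl
  have hPapp : ∀ u : H, P u = ((Pm u : H)) := fun u => rfl
  have hPQ : ∀ u : H, P u + Q u = u := by
    intro u
    rw [hPapp, hQapp]
    abel
  have hQP : ∀ u : H, (inner ℂ (Q u) (P u) : ℂ) = 0 :=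
    fun u => Submodule.inner_left_of_mem_orthogonal (hPM u) (hQperp u)
  -- the operator equation
  have hAXC : A ∘L X = C := by
    ext u
    rw [ContinuousLinearMap.comp_apply]
    have h1 : X u = Y u + (adjoint Y) (Q u) + (RCLike.ofReal t : ℂ) • Q u := rfl
    have h2 : A (X u) = A (Y u) + A ((adjoint Y) (Q u))
        + (RCLike.ofReal t : ℂ) • A (Q u) := by
      rw [h1, map_add, map_add, map_smul]
    have h3 : A (Y u) = C (P u) := by
      rw [hYapp, hAX₀ (Pm u), hPapp]
    have h4 := hAY' (Q u)
    rw [h2, h3, h4, hAQ, smul_zero, add_zero, ← map_add, hPQ]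
  -- self-adjointness
  have hPsym : ∀ a b : H, (inner ℂ (P a) b : ℂ) = inner ℂ a (P b) := by
    intro a b
    have := (isSelfAdjoint_starProjection M).isSymmetric a b
    exact this
  have hQsym : ∀ a b : H, (inner ℂ (Q a) b : ℂ) = inner ℂ a (Q b) := by
    intro a b
    rw [hQapp, ← hPapp, hQapp, ← hPapp, inner_sub_left, inner_sub_right, hPsym]
  have hXsa : IsSelfAdjoint X := by
    rw [ContinuousLinearMap.isSelfAdjoint_iff_isSymmetric]
    intro u v
    simp only [ContinuousLinearMap.coe_coe]
    have h1 : X u = Y u + (adjoint Y) (Q u) + (RCLike.ofReal t : ℂ) • Q u := rfl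
    have h2 : X v = Y v + (adjoint Y) (Q v) + (RCLike.ofReal t : ℂ) • Q v := rfl
    rw [h1, h2, inner_add_left, inner_add_left, inner_add_right, inner_add_right,
      inner_smul_left, inner_smul_right, RCLike.conj_ofReal]
    have s1 : (inner ℂ ((adjoint Y) (Q u)) v : ℂ) = inner ℂ (Q u) (Y v) :=
      adjoint_inner_left Y v (Q u)
    have s2 : (inner ℂ u ((adjoint Y) (Q v)) : ℂ) = inner ℂ (Y u) (Q v) :=
      adjoint_inner_right Y u (Q v)
    have s3 : (inner ℂ (Q u) v : ℂ) = inner ℂ u (Q v) := hQsym u v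
    have s4 : (inner ℂ (Y u) (P v) : ℂ) = inner ℂ (P u) (Y v) := by
      have := hsymm (Pm u) (Pm v)
      rw [hYapp, hYapp, hPapp, hPapp]
      exact this
    have s5 : (inner ℂ (Y u) v : ℂ) = inner ℂ (Y u) (P v) + inner ℂ (Y u) (Q v) := by
      rw [← inner_add_right, hPQ]
    have s6 : (inner ℂ u (Y v) : ℂ) = inner ℂ (P u) (Y v) + inner ℂ (Q u) (Y v) := by
      rw [← inner_add_left, hPQ]
    rw [s1, s2, s3, s5, s6, s4]
    ring
  -- positivity
  have hXpos : ∀ u : H, 0 ≤ X.reApplyInnerSelf u := by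
    intro u
    rw [reApplyInnerSelf_apply]
    have h1 : X u = Y u + (adjoint Y) (Q u) + (RCLike.ofReal t : ℂ) • Q u := rfl
    rw [h1, inner_add_left, inner_add_left, inner_smul_left, RCLike.conj_ofReal,
      map_add, map_add]
    have s1 : (inner ℂ ((adjoint Y) (Q u)) u : ℂ) = inner ℂ (Q u) (Y u) :=
      adjoint_inner_left Y u (Q u)
    have s5 : (inner ℂ (Y u) u : ℂ) = inner ℂ (Y u) (P u) + inner ℂ (Y u) (Q u) := by
      rw [← inner_add_right, hPQ]
    have s7 : (inner ℂ (Q u) u : ℂ) = inner ℂ (Q u) (P u) + inner ℂ (Q u) (Q u) := by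
      rw [← inner_add_right, hPQ]
    rw [s1, s5, s7, hQP]
    -- the three real quantities
    set a : ℝ := RCLike.re (inner ℂ (Y u) (P u) : ℂ) with hadef
    have ha : 0 ≤ a := by
      have := hpos1 (Pm u)
      rw [hadef, hYapp, hPapp]
      exact this
    set b : ℝ := ‖Q u‖ with hbdef
    set c : ℝ := ‖Y u - P (Y u)‖ with hcdef
    have hc2 : c ^ 2 ≤ t * a := by
      have := hpos2 (Pm u)
      rw [hcdef, hadef, hYapp, hPapp]
      exact this
    have hQQ : RCLike.re (inner ℂ (Q u) (Q u) : ℂ) = b ^ 2 := by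
      rw [hbdef, ← inner_self_eq_norm_sq (𝕜 := ℂ)]
    have hcross : -(c * b) ≤ RCLike.re (inner ℂ (Y u) (Q u) : ℂ) := by
      have hd : (inner ℂ (Y u) (Q u) : ℂ) = inner ℂ (Y u - P (Y u)) (Q u) := by
        rw [inner_sub_left]
        have : (inner ℂ (P (Y u)) (Q u) : ℂ) = 0 :=
          Submodule.inner_right_of_mem_orthogonal (hPM (Y u)) (hQperp u)
        rw [this, sub_zero]
      have hneg : RCLike.re (inner ℂ (-(Y u - P (Y u))) (Q u) : ℂ) ≤ c * b := by
        calc RCLike.re (inner ℂ (-(Y u - P (Y u))) (Q u) : ℂ)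
            ≤ ‖-(Y u - P (Y u))‖ * ‖Q u‖ := re_inner_le_norm _ _
          _ = c * b := by rw [norm_neg]
      rw [hd]
      rw [inner_neg_left, map_neg] at hneg
      linarith
    have hsym2 : RCLike.re (inner ℂ (Q u) (Y u) : ℂ) = RCLike.re (inner ℂ (Y u) (Q u) : ℂ) :=
      inner_re_symm _ _
    rw [hsym2, RCLike.re_ofReal_mul, zero_add, hQQ, map_add]
    exact key2 _ _ _ _ ha (norm_nonneg _) (norm_nonneg _) hc2 hcross
  exact ⟨X, isPositive_def'.mpr ⟨hXsa, hXpos⟩, hAXC⟩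
end

section
/- Let K be a Hilbert space, and let T = ![![a, b], ![b*, c]] be a 2×2 operator matrix on H ⊕ H which is self-adjoint, where a : H →L[ℂ] H is positive with closed range and Moore–Penrose inverse a†. Then T is positive if and only if b = a ∘L a† ∘L b and c - b* ∘L a† ∘L b is positive. -/
open ContinuousLinearMap
open scoped InnerProductSpace

private lemma mp_unique {R : Type*} [Semiring R] [StarRing R] (a x y : R)
    (hx1 : a * x * a = a) (hx2 : x * a * x = x) (hx3 : star (a * x) = a * x)
    (hx4 : star (x * a) = x * a)
    (hy1 : a * y * a = a) (hy2 : y * a * y = y) (hy3 : star (a * y) = a * y)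
    (hy4 : star (y * a) = y * a) : x = y := by
  have hax : a * x = a * y := by
    have e1 : (a * y) * (a * x) = a * x := by
      rw [← mul_assoc, mul_assoc a y a, ← mul_assoc, hy1]
    have e2 : (a * y) * (a * x) = a * y := by
      rw [← hy3, ← hx3, ← star_mul, ← mul_assoc, hx1, hy3]
    exact e1.symm.trans e2
  have hxa : x * a = y * a := by
    have f1 : (x * a) * (y * a) = x * a := by
      rw [← mul_assoc, mul_assoc x a y, mul_assoc, hy1]
    have f2 : (x * a) * (y * a) = y * a := by
      rw [← hx4, ← hy4, ← star_mul, ← mul_assoc, mul_assoc y a x, mul_assoc, hx1, hy4]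
    exact f1.symm.trans f2
  calc x = x * a * x := hx2.symm
    _ = (y * a) * x := by rw [hxa]
    _ = y * (a * x) := mul_assoc _ _ _
    _ = y * (a * y) := by rw [hax]
    _ = (y * a) * y := (mul_assoc _ _ _).symm
    _ = y := hy2

/-- Xu–Sheng criterion for positivity of the 2×2 Hermitian operator block matrix
`T = ![![a, b], ![b*, c]]` acting on `H ⊕ H` by `T (x, y) = (a x + b y, b* x + c y)`,
where the `(1,1)`-block `a` is positive with closed range and Moore–Penrose inverse `ad`.
Positivity of `T` is expressed via its quadratic form. -/
theorem block_matrix_positivity_criterion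
    {H : Type*} [NormedAddCommGroup H] [InnerProductSpace ℂ H] [CompleteSpace H]
    (a b c ad : H →L[ℂ] H)
    (ha : a.IsPositive) (hclosed : IsClosed (LinearMap.range (a : H →ₗ[ℂ] H) : Set H))
    (hc : IsSelfAdjoint c)
    (mp1 : a ∘L ad ∘L a = a) (mp2 : ad ∘L a ∘L ad = ad)
    (mp3 : IsSelfAdjoint (a ∘L ad)) (mp4 : IsSelfAdjoint (ad ∘L a)) :
    (∀ x y : H, 0 ≤ (⟪a x + b y, x⟫_ℂ + ⟪(adjoint b) x + c y, y⟫_ℂ).re) ↔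
      (b = a ∘L ad ∘L b ∧ (c - adjoint b ∘L ad ∘L b).IsPositive) := by
  -- ring-theoretic versions of the Moore–Penrose equations
  have m1 : a * ad * a = a := by
    rw [mul_def, mul_def, comp_assoc]; exact mp1
  have m2 : ad * a * ad = ad := by
    rw [mul_def, mul_def, comp_assoc]; exact mp2
  have m3 : star (a * ad) = a * ad := by rw [mul_def]; exact mp3
  have m4 : star (ad * a) = ad * a := by rw [mul_def]; exact mp4
  have hsa : star a = a := ha.isSelfAdjoint.star_eq
  -- `star ad` is also a Moore–Penrose inverse of `a`, hence `ad` is self-adjoint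
  have n1 : a * star ad * a = a := by
    have h := congrArg star m1
    rw [star_mul, star_mul, hsa] at h
    rw [mul_assoc]; exact h
  have n2 : star ad * a * star ad = star ad := by
    have h := congrArg star m2
    rw [star_mul, star_mul, hsa] at h
    rw [mul_assoc]; exact h
  have h5 : a * star ad = ad * a := by
    conv_lhs => rw [← hsa]
    rw [← star_mul]; exact m4
  have h6 : star ad * a = a * ad := by
    conv_lhs => rw [← hsa]
    rw [← star_mul]; exact m3
  have n3 : star (a * star ad) = a * star ad := by rw [h5]; exact m4
  have n4 : star (star ad * a) = star ad * a := by rw [h6]; exact m3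
  have had : star ad = ad :=
    (mp_unique a ad (star ad) m1 m2 m3 m4 n1 n2 n3 n4).symm
  -- auxiliary facts
  have haP : a * (a * ad) = a := by
    have h := congrArg star m1
    rwa [star_mul, m3, hsa] at h
  have hPP : (a * ad) * (a * ad) = a * ad := by
    rw [← mul_assoc, m1]
  have hadjP : adjoint (a * ad) = a * ad := by rw [← star_eq_adjoint]; exact m3
  have hadj_a : adjoint a = a := by rw [← star_eq_adjoint]; exact hsa
  have resymm : ∀ u v : H, (⟪u, v⟫_ℂ).re = (⟪v, u⟫_ℂ).re := by
    intro u v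
    have h := congrArg Complex.re (inner_conj_symm (𝕜 := ℂ) (E := H) u v)
    rw [Complex.conj_re] at h
    exact h.symm
  constructor
  · intro hQ
    -- first: the range condition `b = a ∘L ad ∘L b`
    have hb : b = a ∘L ad ∘L b := by
      ext y
      set t := b y with ht
      set q : H := t - a (ad t) with hq
      have haq : a q = 0 := by
        have h1 : a (a (ad t)) = a t := by
          have := congrArg (fun f : H →L[ℂ] H => f t) haP
          simpa [mul_apply] using this
        simp [hq, map_sub, h1]
      have hPq : a (ad q) = 0 := by
        have h1 : (a * ad) ((a * ad) t) = (a * ad) t := by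
          have := congrArg (fun f : H →L[ℂ] H => f t) hPP
          simpa [mul_apply] using this
        have : (a * ad) q = 0 := by
          simp only [hq, map_sub]
          rw [show a (ad t) = (a * ad) t from rfl, h1, sub_self]
        simpa [mul_apply] using this
      have h2 : ⟪t, q⟫_ℂ = ⟪q, q⟫_ℂ := by
        have ht' : t = a (ad t) + q := by simp [hq]
        have hcross : ⟪a (ad t), q⟫_ℂ = 0 := by
          have : ⟪(a * ad) t, q⟫_ℂ = ⟪t, (a * ad) q⟫_ℂ := by
            conv_lhs => rw [← hadjP]
            exact adjoint_inner_left _ _ _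
          rw [show a (ad t) = (a * ad) t from rfl, this,
            show (a * ad) q = a (ad q) from rfl, hPq, inner_zero_right]
        calc ⟪t, q⟫_ℂ = ⟪a (ad t), q⟫_ℂ + ⟪q, q⟫_ℂ := by rw [← inner_add_left, ← ht']
          _ = ⟪q, q⟫_ℂ := by rw [hcross, zero_add]
      have hr : ∀ r : ℝ, 2 * r * (⟪q, q⟫_ℂ).re ≤ (⟪c y, y⟫_ℂ).re := by
        intro r
        have h := hQ (-((r : ℂ) • q)) y
        have hax : a (-((r : ℂ) • q)) = 0 := by simp [haq]
        have hbq : ⟪adjoint b q, y⟫_ℂ = ⟪q, q⟫_ℂ := by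
          rw [adjoint_inner_left, ← ht, ← inner_conj_symm, h2, inner_conj_symm]
        rw [hax, zero_add, inner_neg_right, inner_smul_right, map_neg, map_smul,
          inner_add_left, inner_neg_left, inner_smul_left, hbq, ← ht, h2] at h
        simp only [Complex.add_re, Complex.neg_re, Complex.ofReal_re, RCLike.star_def,
          Complex.conj_ofReal, Complex.re_ofReal_mul] at h
        linarith
      have hqq : q = 0 := by
        rw [← @re_inner_self_nonpos ℂ]
        by_contra hpos
        push_neg at hpos
        have hE : (0:ℝ) < (⟪q, q⟫_ℂ).re := by
          simpa using hpos
        set C := (⟪c y, y⟫_ℂ).re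
        have := hr ((C + 1) / (2 * (⟪q, q⟫_ℂ).re))
        rw [show 2 * ((C + 1) / (2 * (⟪q, q⟫_ℂ).re)) * (⟪q, q⟫_ℂ).re = C + 1 by
          field_simp] at this
        linarith
      have h0 : t - a (ad t) = 0 := by rw [← hq]; exact hqq
      exact sub_eq_zero.mp h0
    -- second: positivity of the Schur complement
    refine ⟨hb, ?_, fun y => ?_⟩
    · -- self-adjointness of the Schur complement
      have hB : adjoint b ∘L ad ∘L b = star b * (ad * b) := by
        rw [← star_eq_adjoint, mul_def, mul_def]
      rw [← ContinuousLinearMap.isSelfAdjoint_iff_isSymmetric, isSelfAdjoint_iff, hB, star_sub, hc.star_eq, star_mul, star_mul, star_star, had,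
        mul_assoc]
    · rw [reApplyInnerSelf_apply]
      have h := hQ (-(ad (b y))) y
      have haw : a (ad (b y)) = b y := by
        conv_rhs => rw [hb]
        rfl
      have h1 : a (-(ad (b y))) + b y = 0 := by
        rw [map_neg, haw, neg_add_cancel]
      have h2 : adjoint b (-(ad (b y))) + c y = (c - adjoint b ∘L ad ∘L b) y := by
        simp only [map_neg, ContinuousLinearMap.sub_apply, comp_apply]
        abel
      rw [h1, h2, inner_zero_left, zero_add] at h
      exact h
  · rintro ⟨hb, hs⟩ x y
    have haw : a (ad (b y)) = b y := by
      conv_rhs => rw [hb]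
      rfl
    have h1 := ha.2 (x + ad (b y))
    have h2 := hs.2 y
    rw [reApplyInnerSelf_apply] at h1 h2
    rw [map_add, haw] at h1
    have hsy : (c - adjoint b ∘L ad ∘L b) y = c y - adjoint b (ad (b y)) := by
      simp only [ContinuousLinearMap.sub_apply, comp_apply]
    rw [hsy] at h2
    have e1 : (⟪a x, ad (b y)⟫_ℂ).re = (⟪b y, x⟫_ℂ).re := by
      have hsym : ⟪a x, ad (b y)⟫_ℂ = ⟪x, a (ad (b y))⟫_ℂ := by
        conv_lhs => rw [← hadj_a]
        exact adjoint_inner_left _ _ _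
      rw [hsym, haw]; exact resymm _ _
    have e2 : (⟪adjoint b x, y⟫_ℂ).re = (⟪b y, x⟫_ℂ).re := by
      rw [adjoint_inner_left]; exact resymm _ _
    have e3 : (⟪adjoint b (ad (b y)), y⟫_ℂ).re = (⟪b y, ad (b y)⟫_ℂ).re := by
      rw [adjoint_inner_left]; exact resymm _ _
    simp only [inner_add_left, inner_add_right, inner_sub_left, Complex.add_re,
      Complex.sub_re, RCLike.re_to_complex] at h1 h2 ⊢
    linarith
end

section
/- Let A = ![![1,0,0],![0,1,0],![0,0,0]] and C = ![![1,0,0],![0,0,1],![0,0,0]] be 3×3 complex matrices. Then range C = range A, C * Aᴴ is positive semidefinite, but there is no positive semidefinite 3×3 complex matrix X with A * X = C. -/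
open scoped ComplexOrder
theorem counterexample_no_positive_solution :
    let A : Matrix (Fin 3) (Fin 3) ℂ := !![1, 0, 0; 0, 1, 0; 0, 0, 0]
    let C : Matrix (Fin 3) (Fin 3) ℂ := !![1, 0, 0; 0, 0, 1; 0, 0, 0]
    LinearMap.range C.mulVecLin = LinearMap.range A.mulVecLin ∧
      (C * A.conjTranspose).PosSemidef ∧
      ¬ ∃ X : Matrix (Fin 3) (Fin 3) ℂ, X.PosSemidef ∧ A * X = C := by
  intro A C
  refine ⟨?_, ?_, ?_⟩
  · apply le_antisymm
    · rintro v ⟨w, rfl⟩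
      refine ⟨![w 0, w 2, 0], ?_⟩
      funext i
      fin_cases i <;>
        simp [A, C, Matrix.mulVecLin_apply, Matrix.mulVec, dotProduct,
          Fin.sum_univ_three, Matrix.vecHead, Matrix.vecTail]
    · rintro v ⟨w, rfl⟩
      refine ⟨![w 0, 0, w 1], ?_⟩
      funext i
      fin_cases i <;>
        simp [A, C, Matrix.mulVecLin_apply, Matrix.mulVec, dotProduct,
          Fin.sum_univ_three, Matrix.vecHead, Matrix.vecTail]
  · have hCA : C * A.conjTranspose = !![1, 0, 0; 0, 0, 0; 0, 0, 0] := by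
      ext i j
      fin_cases i <;> fin_cases j <;>
        simp [A, C, Matrix.mul_apply, Matrix.conjTranspose_apply,
          Fin.sum_univ_three, Matrix.vecHead, Matrix.vecTail]
    rw [hCA]
    refine Matrix.PosSemidef.of_dotProduct_mulVec_nonneg ?_ ?_
    · ext i j
      fin_cases i <;> fin_cases j <;>
        simp [Matrix.conjTranspose_apply, Matrix.vecHead, Matrix.vecTail]
    · intro v
      have : dotProduct (star v) ((!![1, 0, 0; 0, 0, 0; 0, 0, 0] : Matrix (Fin 3) (Fin 3) ℂ).mulVec v)
          = star (v 0) * v 0 := by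
        simp [Matrix.mulVec, dotProduct, Fin.sum_univ_three, Matrix.vecHead, Matrix.vecTail]
      rw [this]
      exact star_mul_self_nonneg _
  · rintro ⟨X, hX, hAX⟩
    have h11 : X 1 1 = 0 := by
      have h := congrFun (congrFun hAX 1) 1
      simpa [A, C, Matrix.mul_apply, Fin.sum_univ_three, Matrix.vecHead, Matrix.vecTail] using h
    have h12 : X 1 2 = 1 := by
      have h := congrFun (congrFun hAX 1) 2
      simpa [A, C, Matrix.mul_apply, Fin.sum_univ_three, Matrix.vecHead, Matrix.vecTail] using h
    have h21 : X 2 1 = 1 := by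
      have h2 := congrFun (congrFun hX.1 1) 2
      simp [Matrix.conjTranspose_apply] at h2
      rw [h12] at h2
      simpa using congrArg (starRingEnd ℂ) h2
    have hdiag : 0 ≤ X 2 2 := by
      have := hX.dotProduct_mulVec_nonneg ![0, 0, 1]
      simpa [Matrix.mulVec, dotProduct, Fin.sum_univ_three, Matrix.vecHead, Matrix.vecTail] using this
    rw [Complex.le_def] at hdiag
    set r : ℝ := (X 2 2).re with hr
    have hr0 : 0 ≤ r := hdiag.1
    have him : (X 2 2).im = 0 := hdiag.2.symm
    have hX22 : X 2 2 = (r : ℂ) := by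
      apply Complex.ext <;> simp [hr, him]
    set s : ℝ := 1 / (r + 1) with hs
    have hspos : 0 < s := by positivity
    have key := hX.dotProduct_mulVec_nonneg ![0, 1, (-s : ℂ)]
    have hval : dotProduct (star ![0, 1, (-s : ℂ)]) (X.mulVec ![0, 1, (-s : ℂ)])
        = ((-2 * s + s ^ 2 * r : ℝ) : ℂ) := by
      simp [Matrix.mulVec, dotProduct, Fin.sum_univ_three, Matrix.vecHead, Matrix.vecTail, h11, h12, h21, hX22]
      ring
    rw [hval, Complex.le_def] at key
    have : 0 ≤ -2 * s + s ^ 2 * r := by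
      have h := key.1
      rwa [Complex.zero_re, Complex.ofReal_re] at h
    have hsr : s * r < 1 := by
      rw [hs]
      rw [div_mul_eq_mul_div, div_lt_one (by linarith)]
      linarith
    nlinarith
end

section
/- For t ∈ (0, 1], let P(t) = ![![1,0],![0,0]] and Q(t) = ![![c^2, s c],![s c, s^2]] where c = cos(π t / 2) and s = sin(π t / 2). Then P(t) + Q(t) is positive definite (invertible), and its positive square root is ![![α, β],![β, γ]] where α = (1/2)(2 - s)(√(1+c) + √(1-c)), β = (1/2) s (√(1+c) - √(1-c)), γ = (1/2) s (√(1+c) + √(1-c)). -/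
open Real

set_option maxHeartbeats 1000000 in

theorem sqrt_of_sum_of_projections (t : ℝ) (ht : t ∈ Set.Ioc (0 : ℝ) 1) :
    let c : ℝ := Real.cos (π * t / 2)
    let s : ℝ := Real.sin (π * t / 2)
    let P : Matrix (Fin 2) (Fin 2) ℝ := !![1, 0; 0, 0]
    let Q : Matrix (Fin 2) (Fin 2) ℝ := !![c ^ 2, s * c; s * c, s ^ 2]
    let α : ℝ := (1 / 2) * (2 - s) * (Real.sqrt (1 + c) + Real.sqrt (1 - c))
    let β : ℝ := (1 / 2) * s * (Real.sqrt (1 + c) - Real.sqrt (1 - c))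
    let γ : ℝ := (1 / 2) * s * (Real.sqrt (1 + c) + Real.sqrt (1 - c))
    let R : Matrix (Fin 2) (Fin 2) ℝ := !![α, β; β, γ]
    (P + Q).PosDef ∧ R.PosSemidef ∧ R * R = P + Q := by
  obtain ⟨ht0, ht1⟩ := ht
  intro c s P Q α β γ R
  have hpi := Real.pi_pos
  have hθ1 : 0 < π * t / 2 := by positivity
  have hθpi : π * t / 2 < π := by nlinarith
  have hs : 0 < s := Real.sin_pos_of_pos_of_lt_pi hθ1 hθpi
  have hs1 : s ≤ 1 := Real.sin_le_one _
  have hc0 : 0 ≤ c := Real.cos_nonneg_of_mem_Icc ⟨by linarith, by nlinarith⟩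
  have hsc : s ^ 2 + c ^ 2 = 1 := Real.sin_sq_add_cos_sq _
  have hc1 : c < 1 := by nlinarith
  set a := Real.sqrt (1 + c) with ha_def
  set b := Real.sqrt (1 - c) with hb_def
  have ha2 : a ^ 2 = 1 + c := Real.sq_sqrt (by linarith)
  have hb2 : b ^ 2 = 1 - c := Real.sq_sqrt (by linarith)
  have ha : 0 < a := Real.sqrt_pos.mpr (by linarith)
  have hb : 0 < b := Real.sqrt_pos.mpr (by linarith)
  have hab : a * b = s := by
    rw [ha_def, hb_def, ← Real.sqrt_mul (by linarith)]
    have h1 : (1 + c) * (1 - c) = s ^ 2 := by nlinarith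
    rw [h1, Real.sqrt_sq hs.le]
  have hα : α = (1 / 2) * (2 - s) * (a + b) := rfl
  have hβ : β = (1 / 2) * s * (a - b) := rfl
  have hγ : γ = (1 / 2) * s * (a + b) := rfl
  have hR : R = !![α, β; β, γ] := rfl
  clear_value R γ β α b a
  have hPQ : P + Q = !![1 + c ^ 2, s * c; s * c, s ^ 2] := by
    ext i j; fin_cases i <;> fin_cases j <;> simp [P, Q]
  refine ⟨⟨?_, fun x hx => ?_⟩, ⟨?_, fun x => ?_⟩, ?_⟩
  · rw [hPQ]
    ext i j; fin_cases i <;> fin_cases j <;>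
      simp [Matrix.conjTranspose_apply]
  · have hx01 : x 0 ≠ 0 ∨ x 1 ≠ 0 := by
      by_contra h
      push_neg at h
      exact hx (Finsupp.ext fun i => by fin_cases i <;> simp [h.1, h.2])
    rw [hPQ]
    simp [dotProduct, Matrix.mulVec, Fin.sum_univ_two, Finsupp.sum_fintype]
    rcases hx01 with h0 | h1
    · have : 0 < (x 0) ^ 2 := by positivity
      nlinarith [sq_nonneg (c * x 0 + s * x 1)]
    · have : 0 < (x 1) ^ 2 := by positivity
      nlinarith [sq_nonneg (s * x 1 + 2 * c * x 0), sq_nonneg (x 0),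
        mul_nonneg (sq_nonneg (x 0)) (by nlinarith : (0:ℝ) ≤ 1 - c ^ 2),
        mul_pos (pow_pos hs 2) this]
  · rw [hR]
    ext i j; fin_cases i <;> fin_cases j <;>
      simp [Matrix.conjTranspose_apply]
  · have hαpos : 0 < α := by rw [hα]; nlinarith
    have hdet : α * γ - β ^ 2 = s := by
      rw [hα, hβ, hγ]
      linear_combination (s * (1 - s) / 2) * ha2 + (s * (1 - s) / 2) * hb2 + s * hab
    rw [hR]
    simp [dotProduct, Matrix.mulVec, Fin.sum_univ_two, Finsupp.sum_fintype]
    nlinarith [sq_nonneg (α * x 0 + β * x 1), sq_nonneg (x 1), hdet, hαpos, hs]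
  · rw [hR, hPQ]
    ext i j
    fin_cases i <;> fin_cases j <;>
      simp [Matrix.mul_apply, Fin.sum_univ_two, hα, hβ, hγ]
    · linear_combination (((2 - s) ^ 2 + s ^ 2) / 4) * ha2 +
        (((2 - s) ^ 2 + s ^ 2) / 4) * hb2 + (2 - 2 * s) * hab - hsc
    · linear_combination (s / 2) * ha2 - (s / 2) * hb2
    · linear_combination (s / 2) * ha2 - (s / 2) * hb2
    · linear_combination (s ^ 2 / 2) * ha2 + (s ^ 2 / 2) * hb2
end
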